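/- arXiv:0910.2318 — 7 statements merged into one kernel-verified Lean document; each statement's English description precedes it below -/
import Mathlib

section
/- Let X be a Polish space and let I be a σ-ideal on X generated by closed sets. If G ⊆ X is a Gδ set whose closure is I-perfect, then G does not belong to I. -/
open Set

/-- A σ-ideal: closed under subsets and countable unions. -/
def SigmaIdeal {X : Type*} (I : Set (Set X)) : Prop :=
  (∀ A B : Set X, A ⊆ B → B ∈ I → A ∈ I) ∧
  ∀ f : ℕ → Set X, (∀ n, f n ∈ I) → (⋃ n, f n) ∈ I

/-- `I` is generated by closed sets: every member of `I` is contained in a countable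
union of closed sets belonging to `I`. -/
def GeneratedByClosedSets {X : Type*} [TopologicalSpace X] (I : Set (Set X)) : Prop :=
  ∀ A ∈ I, ∃ f : ℕ → Set X, (∀ n, IsClosed (f n) ∧ f n ∈ I) ∧ A ⊆ ⋃ n, f n

/-- `A` is `I`-perfect: nonempty, and for every open `U` the set `A ∩ U` is empty or
`I`-positive. -/
def IdealPerfect {X : Type*} [TopologicalSpace X] (I : Set (Set X)) (A : Set X) : Prop :=
  A.Nonempty ∧ ∀ U : Set X, IsOpen U → A ∩ U = ∅ ∨ A ∩ U ∉ I

theorem gdelta_with_perfect_closure_not_in_ideal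
    {X : Type*} [TopologicalSpace X] [PolishSpace X]
    (I : Set (Set X)) (hI : SigmaIdeal I) (hgen : GeneratedByClosedSets I)
    (G : Set X) (hG : IsGδ G) (hcl : IdealPerfect I (closure G)) :
    G ∉ I := by
  intro hGI
  obtain ⟨f, hf, hGsub⟩ := hgen G hGI
  -- work in the subtype C = closure G
  set C : Set X := closure G with hC
  haveI : PolishSpace C := IsClosed.polishSpace isClosed_closure
  letI := TopologicalSpace.upgradeIsCompletelyMetrizable C
  haveI : Nonempty C := hcl.1.to_subtype
  -- G' is dense Gδ in C
  set G' : Set C := Subtype.val ⁻¹' G with hG'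
  have hG'gδ : IsGδ G' := by
    obtain ⟨T, hT, hTc, rfl⟩ := hG
    rw [hG', preimage_sInter]
    exact IsGδ.biInter hTc fun t ht =>
      ((hT t ht).preimage continuous_subtype_val).isGδ
  have himg : (Subtype.val '' G' : Set X) = G := by
    rw [hG', Subtype.image_preimage_coe]
    exact inter_eq_self_of_subset_right subset_closure
  have hG'dense : Dense G' := by
    intro x
    rw [closure_subtype, himg]
    exact x.2
  have hG'res : G' ∈ residual C := residual_of_dense_Gδ hG'gδ hG'dense
  -- each preimage of f n is closed with empty interior, hence its complement is open dense
  have hcompl : ∀ n, (Subtype.val ⁻¹' f n : Set C)ᶜ ∈ residual C := by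
    intro n
    have hclosed : IsClosed (Subtype.val ⁻¹' f n : Set C) :=
      (hf n).1.preimage continuous_subtype_val
    apply residual_of_dense_open hclosed.isOpen_compl
    rw [← interior_eq_empty_iff_dense_compl]
    by_contra hne
    obtain ⟨x, hx⟩ := nonempty_iff_ne_empty.2 hne
    obtain ⟨U, hUsub, hUopen, hxU⟩ := _root_.mem_nhds_iff.mp
      (mem_interior_iff_mem_nhds.mp hx)
    obtain ⟨V, hVopen, hUV⟩ := isOpen_induced_iff.mp hUopen
    -- C ∩ V is nonempty and contained in f n
    have hsub : C ∩ V ⊆ f n := by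
      rintro y ⟨hyC, hyV⟩
      have : (⟨y, hyC⟩ : C) ∈ U := by rw [← hUV]; exact hyV
      exact hUsub this
    have hne' : C ∩ V ≠ ∅ := by
      apply nonempty_iff_ne_empty.mp
      refine ⟨(x : X), x.2, ?_⟩
      have : (x : C) ∈ U := hxU
      rw [← hUV] at this
      exact this
    rcases hcl.2 V hVopen with h | h
    · exact hne' h
    · exact h (hI.1 _ _ hsub (hf n).2)
  -- intersect
  have hD : (⋂ n, (Subtype.val ⁻¹' f n : Set C)ᶜ) ∈ residual C :=
    countable_iInter_mem.mpr hcompl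
  have hres : G' ∩ (⋂ n, (Subtype.val ⁻¹' f n : Set C)ᶜ) ∈ residual C :=
    Filter.inter_mem hG'res hD
  obtain ⟨x, hxG, hxD⟩ := (dense_of_mem_residual hres).nonempty
  have : (x : X) ∈ ⋃ n, f n := hGsub hxG
  obtain ⟨n, hn⟩ := mem_iUnion.mp this
  exact (mem_iInter.mp hxD n) hn
end

section
/- Let X be a Polish space and let I be a σ-ideal on X generated by closed sets. If G ⊆ X is a Gδ set, then G is I-perfect if and only if the closure of G is I-perfect. -/
open Set

/-- Preimage of a Gδ set under a continuous map is Gδ. -/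
lemma isGδ_preimage_of_continuous {X Y : Type*} [TopologicalSpace X] [TopologicalSpace Y]
    {f : X → Y} (hf : Continuous f) {s : Set Y} (hs : IsGδ s) : IsGδ (f ⁻¹' s) := by
  obtain ⟨T, hTo, hTc, rfl⟩ := hs
  haveI := hTc.to_subtype
  have heq : f ⁻¹' ⋂₀ T = ⋂ t : T, f ⁻¹' (t : Set Y) := by
    rw [sInter_eq_iInter, preimage_iInter]
  rw [heq]
  exact IsGδ.iInter fun t => ((hTo t t.2).preimage hf).isGδ

theorem gdelta_perfect_iff_closure_perfect
    {X : Type*} [TopologicalSpace X] [PolishSpace X]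
    (I : Set (Set X)) (hI : SigmaIdeal I) (hgen : GeneratedByClosedSets I)
    (G : Set X) (hG : IsGδ G) :
    IdealPerfect I G ↔ IdealPerfect I (closure G) := by
  constructor
  · rintro ⟨hne, hU⟩
    refine ⟨hne.mono subset_closure, ?_⟩
    intro U hUopen
    rcases eq_empty_or_nonempty (closure G ∩ U) with h | h
    · exact Or.inl h
    · right
      have hGU : (G ∩ U).Nonempty := by
        obtain ⟨x, hxc, hxU⟩ := h
        have := mem_closure_iff.mp hxc U hUopen hxU
        exact this.imp fun y hy => ⟨hy.2, hy.1⟩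
      intro hmem
      have hmem' : G ∩ U ∈ I :=
        hI.1 _ _ (inter_subset_inter_left U subset_closure) hmem
      rcases hU U hUopen with h0 | h1
      · exact hGU.ne_empty h0
      · exact h1 hmem'
  · rintro ⟨hne, hper⟩
    have hGne : G.Nonempty := by rwa [closure_nonempty_iff] at hne
    refine ⟨hGne, ?_⟩
    intro U hUopen
    rcases eq_empty_or_nonempty (G ∩ U) with h | h
    · exact Or.inl h
    right
    intro hmem
    obtain ⟨f, hf, hsub⟩ := hgen _ hmem
    have hYgd : IsGδ (G ∩ U) := hG.inter hUopen.isGδ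
    set C : Set X := closure (G ∩ U) with hC
    have hCcl : IsClosed C := isClosed_closure
    haveI : PolishSpace C := hCcl.polishSpace
    letI := TopologicalSpace.upgradeIsCompletelyMetrizable C
    haveI : Nonempty C := ⟨⟨h.some, subset_closure h.some_mem⟩⟩
    set s : Set C := (↑) ⁻¹' (G ∩ U) with hsdef
    have hs_gδ : IsGδ s := isGδ_preimage_of_continuous continuous_subtype_val hYgd
    have hs_dense : Dense s := by
      rw [dense_iff_inter_open]
      intro o ho hone
      obtain ⟨V, hVopen, hViV⟩ := isOpen_induced_iff.mp ho
      obtain ⟨y, hy⟩ := hone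
      have hyV : (y : X) ∈ V := by
        have : y ∈ (↑) ⁻¹' V := by rw [hViV]; exact hy
        exact this
      obtain ⟨z, hzV, hzGU⟩ := mem_closure_iff.mp y.2 V hVopen hyV
      refine ⟨⟨z, subset_closure hzGU⟩, ?_, hzGU⟩
      rw [← hViV]; exact hzV
    set g : ℕ → Set C := fun n => (↑) ⁻¹' (f n) with hg
    have hgclosed : ∀ n, IsClosed (g n) :=
      fun n => (hf n).1.preimage continuous_subtype_val
    have hex : ∃ n, (interior (g n)).Nonempty := by
      by_contra hcon
      push_neg at hcon
      have hcompl : ∀ n, Dense (g n)ᶜ := fun n =>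
        interior_eq_empty_iff_dense_compl.mp (hcon n)
      have ht_gδ : IsGδ (⋂ n, (g n)ᶜ) :=
        IsGδ.iInter fun n => (hgclosed n).isOpen_compl.isGδ
      have ht_dense : Dense (⋂ n, (g n)ᶜ) :=
        dense_iInter_of_isOpen (fun n => (hgclosed n).isOpen_compl) hcompl
      have := (hs_dense.inter_of_Gδ hs_gδ ht_gδ ht_dense).nonempty
      obtain ⟨x, hxs, hxt⟩ := this
      obtain ⟨n, hn⟩ := mem_iUnion.mp (hsub hxs)
      exact (mem_iInter.mp hxt n) hn
    obtain ⟨n, y, hy⟩ := hex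
    have hio : IsOpen (interior (g n)) := isOpen_interior
    obtain ⟨V, hVopen, hViV⟩ := isOpen_induced_iff.mp hio
    have hyV : (y : X) ∈ V := by
      have : y ∈ (↑) ⁻¹' V := by rw [hViV]; exact hy
      exact this
    have hVg : (↑) ⁻¹' V ⊆ g n := by rw [hViV]; exact interior_subset
    have hkey : G ∩ (U ∩ V) ⊆ f n := by
      rintro x ⟨hxG, hxU, hxV⟩
      exact hVg (show (⟨x, subset_closure ⟨hxG, hxU⟩⟩ : C) ∈ (↑) ⁻¹' V from hxV)
    have hW : IsOpen (U ∩ V) := hUopen.inter hVopen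
    obtain ⟨z, hzV, hzG, hzU⟩ := mem_closure_iff.mp y.2 V hVopen hyV
    have hcne : (closure G ∩ (U ∩ V)).Nonempty :=
      ⟨z, subset_closure hzG, hzU, hzV⟩
    rcases hper (U ∩ V) hW with h0 | h1
    · exact hcne.ne_empty h0
    · apply h1
      have hsubc : closure G ∩ (U ∩ V) ⊆ f n := by
        intro x hx
        have hx' : x ∈ closure (G ∩ (U ∩ V)) := by
          have := hW.inter_closure (t := G) ⟨hx.2, hx.1⟩
          rwa [inter_comm] at this
        have := closure_mono hkey hx'
        rwa [(hf n).1.closure_eq] at this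
      exact hI.1 _ _ hsubc (hf n).2
end

section
/- Let I and J be Π¹₁ on Σ¹₁ σ-ideals on Polish spaces X and Y, respectively. If A ⊆ X × Y is analytic and A ∈ I ⊗ J, then there exists an analytic set D ⊆ X × Y with A ∩ D = ∅ such that {x ∈ X : {y ∈ Y : (x,y) ∉ D} ∉ J} ∈ I (i.e., for I-almost all x, the section D_x is J-co-small). -/
open Set

/-- A family of sets is Π¹₁ on Σ¹₁ if for every analytic `L ⊆ ω^ω × X` the set of
parameters `t` whose section `L_t` belongs to the family is coanalytic. -/
def Pi11OnSigma11 {X : Type*} [TopologicalSpace X] (I : Set (Set X)) : Prop :=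
  ∀ L : Set ((ℕ → ℕ) × X), MeasureTheory.AnalyticSet L →
    MeasureTheory.AnalyticSet {t : ℕ → ℕ | {x : X | (t, x) ∈ L} ∈ I}ᶜ

/-- The Fubini product of two σ-ideals. -/
def FubiniProd {X Y : Type*} (I : Set (Set X)) (J : Set (Set Y)) : Set (Set (X × Y)) :=
  {A | {x : X | {y : Y | (x, y) ∈ A} ∉ J} ∈ I}

section FSepAux

open Set List

namespace FSep

/-- first `k` values of `b` as a list. -/
def pre (b : ℕ → ℕ) (k : ℕ) : List ℕ := List.ofFn (fun i : Fin k => b i)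

/-- strict prefix -/
def SP (s t : List ℕ) : Prop := s <+: t ∧ s.length < t.length

def IsTree (T : Set (List ℕ)) : Prop := ∀ ⦃s t : List ℕ⦄, s <+: t → t ∈ T → s ∈ T

def IllF (T : Set (List ℕ)) : Prop := ∃ b : ℕ → ℕ, ∀ k, pre b k ∈ T

def Hom (F : List ℕ → List ℕ) (T T' : Set (List ℕ)) : Prop :=
  (∀ s ∈ T, F s ∈ T') ∧ ∀ s t, s ∈ T → t ∈ T → SP s t → SP (F s) (F t)

def Leq (T T' : Set (List ℕ)) : Prop := ∃ F, Hom F T T'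

def Lt (T T' : Set (List ℕ)) : Prop :=
  [] ∈ T' ∧ ∃ F, Hom F T T' ∧ ∀ s ∈ T, F s ≠ []

@[simp] theorem pre_length (b : ℕ → ℕ) (k : ℕ) : (pre b k).length = k := by simp [pre]

@[simp] theorem pre_zero (b : ℕ → ℕ) : pre b 0 = [] := by simp [pre]

theorem pre_getElem (b : ℕ → ℕ) {k i : ℕ} (h : i < k) : (pre b k)[i]'(by simpa using h) = b i := by
  simp [pre]

theorem pre_take (b : ℕ → ℕ) (m k : ℕ) (h : m ≤ k) : (pre b k).take m = pre b m := by
  apply List.ext_getElem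
  · simp [Nat.min_eq_left h]
  · intro i h1 h2
    have hik : i < k := lt_of_lt_of_le (by simpa using h2) h
    simp [pre]

theorem pre_prefix (b : ℕ → ℕ) {m k : ℕ} (h : m ≤ k) : pre b m <+: pre b k := by
  rw [← pre_take b m k h]; exact List.take_prefix _ _

theorem pre_sp (b : ℕ → ℕ) {m k : ℕ} (h : m < k) : SP (pre b m) (pre b k) :=
  ⟨pre_prefix b h.le, by simpa using h⟩

theorem SP.trans {s t u : List ℕ} (h1 : SP s t) (h2 : SP t u) : SP s u :=
  ⟨h1.1.trans h2.1, h1.2.trans h2.2⟩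

theorem SP.ne_nil {s t : List ℕ} (h : SP s t) : t ≠ [] := by
  intro he; rw [he] at h; simpa using h.2

theorem sp_nil {t : List ℕ} (h : t ≠ []) : SP [] t :=
  ⟨List.nil_prefix, by simpa using List.length_pos_iff.2 h⟩

/-- from an infinite strictly increasing chain in a tree we get a branch -/
theorem illF_of_chain {T : Set (List ℕ)} (hT : IsTree T) (c : ℕ → List ℕ)
    (hc : ∀ n, c n ∈ T) (hch : ∀ n, SP (c n) (c (n + 1))) : IllF T := by
  have hpre : ∀ m n, m ≤ n → c m <+: c n := by
    intro m n h
    induction n with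
    | zero => cases Nat.le_zero.1 h; exact List.prefix_rfl
    | succ n ih =>
      rcases Nat.lt_or_ge m (n+1) with h' | h'
      · exact (ih (Nat.lt_succ_iff.1 h')).trans (hch n).1
      · have : m = n + 1 := le_antisymm h h'
        subst this; exact List.prefix_rfl
  have hlen : ∀ n, n ≤ (c n).length := by
    intro n
    induction n with
    | zero => exact Nat.zero_le _
    | succ n ih => exact Nat.succ_le_of_lt (lt_of_le_of_lt ih (hch n).2)
  refine ⟨fun i => (c (i + 1)).getD i 0, fun k => ?_⟩
  have hk : pre (fun i => (c (i + 1)).getD i 0) k = (c k).take k := by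
    apply List.ext_getElem
    · simp [Nat.min_eq_left (hlen k)]
    · intro i h1 h2
      have hik : i < k := by simpa using h1
      have hpref : c (i + 1) <+: c k := hpre _ _ hik
      have hil : i < (c (i + 1)).length := lt_of_lt_of_le (Nat.lt_succ_self i) (hlen (i + 1))
      obtain ⟨r, hr⟩ := hpref
      have hik' : i < (c k).length := lt_of_lt_of_le hik (hlen k)
      rw [pre_getElem _ hik, List.getElem_take, ← List.getD_eq_getElem (c k) 0 hik', ← hr,
        List.getD_append _ _ _ _ hil]
  rw [hk]
  exact hT (List.take_prefix _ _) (hc k)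

theorem leq_illF {T T' : Set (List ℕ)} (hT' : IsTree T') (h : Leq T T') (hi : IllF T) :
    IllF T' := by
  obtain ⟨F, hF⟩ := h
  obtain ⟨b, hb⟩ := hi
  exact illF_of_chain hT' (fun n => F (pre b n)) (fun n => hF.1 _ (hb n))
    (fun n => hF.2 _ _ (hb n) (hb (n+1)) (pre_sp b (Nat.lt_succ_self n)))

theorem lt_illF {T T' : Set (List ℕ)} (hT' : IsTree T') (h : Lt T T') (hi : IllF T) :
    IllF T' := by
  obtain ⟨-, F, hF, -⟩ := h
  exact leq_illF hT' ⟨F, hF⟩ hi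

theorem illF_lt {T T' : Set (List ℕ)} (hi : IllF T') : Lt T T' := by
  obtain ⟨b, hb⟩ := hi
  refine ⟨by simpa using hb 0, fun s => pre b (s.length + 1), ⟨fun s _ => hb _, ?_⟩, ?_⟩
  · intro s t _ _ hst
    exact pre_sp b (by have := hst.2; omega)
  · intro s _
    intro he
    have := congrArg List.length he
    simp at this

theorem illF_leq {T T' : Set (List ℕ)} (hi : IllF T') : Leq T T' := by
  obtain ⟨b, hb⟩ := hi
  exact ⟨fun s => pre b s.length, fun s _ => hb _, fun s t _ _ hst => pre_sp b hst.2⟩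

/-! ### ranks -/

def rel (T : Set (List ℕ)) (s t : List ℕ) : Prop := SP t s ∧ s ∈ T

theorem wf_rel {T : Set (List ℕ)} (hT : IsTree T) (h : ¬ IllF T) : WellFounded (rel T) := by
  by_contra hw
  apply h
  have hex : ∃ a, ¬ Acc (rel T) a := by
    by_contra hc
    push_neg at hc
    exact hw ⟨hc⟩
  obtain ⟨a, ha⟩ := hex
  have step : ∀ x : {x : List ℕ // ¬ Acc (rel T) x},
      ∃ y : {x : List ℕ // ¬ Acc (rel T) x}, rel T y.1 x.1 := by
    rintro ⟨x, hx⟩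
    by_contra hc
    push_neg at hc
    apply hx
    refine Acc.intro x fun y hy => ?_
    by_contra hyc
    exact (hc ⟨y, hyc⟩) hy
  choose g hg using step
  let c : ℕ → {x : List ℕ // ¬ Acc (rel T) x} := fun n => Nat.rec ⟨a, ha⟩ (fun _ p => g p) n
  have hcs : ∀ n, c (n + 1) = g (c n) := fun n => rfl
  refine illF_of_chain hT (fun n => (c (n + 1)).1) (fun n => (hg (c n)).2)
    (fun n => (hg (c (n + 1))).1)

noncomputable def rkn {T : Set (List ℕ)} (hW : WellFounded (rel T)) (s : List ℕ) : Ordinal :=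
  (hW.apply s).rank

theorem rkn_lt {T : Set (List ℕ)} (hW : WellFounded (rel T)) {a b : List ℕ}
    (h : rel T a b) : rkn hW a < rkn hW b :=
  Acc.rank_lt_of_rel (hW.apply b) h

theorem rkn_exists {T : Set (List ℕ)} (hW : WellFounded (rel T)) {s : List ℕ} {o : Ordinal}
    (h : o < rkn hW s) : ∃ a, rel T a s ∧ o ≤ rkn hW a := by
  rw [rkn, (hW.apply s).rank_eq, Ordinal.lt_iSup_iff] at h
  obtain ⟨⟨a, ha⟩, hlt⟩ := h
  refine ⟨a, ha, ?_⟩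
  rw [Order.lt_succ_iff] at hlt
  exact hlt

theorem rkn_le {T : Set (List ℕ)} (hW : WellFounded (rel T)) {s : List ℕ} {o : Ordinal}
    (h : ∀ a, rel T a s → rkn hW a < o) : rkn hW s ≤ o := by
  rw [rkn, (hW.apply s).rank_eq]
  apply Ordinal.iSup_le
  rintro ⟨a, ha⟩
  rw [Order.succ_le_iff]
  exact h a ha

theorem hom_rkn_le {T T' : Set (List ℕ)} (hW : WellFounded (rel T)) (hW' : WellFounded (rel T'))
    {F : List ℕ → List ℕ} (hF : Hom F T T') : ∀ s ∈ T, rkn hW s ≤ rkn hW' (F s) := by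
  intro s
  induction s using hW.induction with
  | _ s IH =>
    intro hs
    apply rkn_le hW
    intro a ha
    have h1 : rkn hW a ≤ rkn hW' (F a) := IH a ha ha.2
    have h2 : rkn hW' (F a) < rkn hW' (F s) :=
      rkn_lt hW' ⟨hF.2 _ _ hs ha.2 ha.1, hF.1 _ ha.2⟩
    exact lt_of_le_of_lt h1 h2

/-! ### construction of homomorphisms -/

noncomputable def mlgo {T T' : Set (List ℕ)} (hW : WellFounded (rel T))
    (hW' : WellFounded (rel T')) (sb : List ℕ) : List ℕ → List ℕ
  | [] => sb
  | n :: r => Classical.epsilon (fun w => w ∈ T' ∧ SP (mlgo hW hW' sb r) w ∧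
      rkn hW ((n :: r).reverse) ≤ rkn hW' w)

theorem mlgo_spec {T T' : Set (List ℕ)} (hT : IsTree T) (hW : WellFounded (rel T))
    (hW' : WellFounded (rel T')) {sb : List ℕ} (hsb : sb ∈ T')
    (hle : rkn hW [] ≤ rkn hW' sb) :
    ∀ r : List ℕ, r.reverse ∈ T →
      mlgo hW hW' sb r ∈ T' ∧ sb <+: mlgo hW hW' sb r ∧
        rkn hW r.reverse ≤ rkn hW' (mlgo hW hW' sb r) := by
  intro r
  induction r with
  | nil => intro _; exact ⟨hsb, List.prefix_rfl, by simpa [mlgo] using hle⟩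
  | cons n r ih =>
    intro hs
    have hpref : r.reverse <+: (n :: r).reverse := by
      rw [List.reverse_cons]; exact ⟨[n], rfl⟩
    have hr : r.reverse ∈ T := hT hpref hs
    obtain ⟨ih1, ih2, ih3⟩ := ih hr
    have hrel : rel T ((n :: r).reverse) r.reverse :=
      ⟨⟨hpref, by simp⟩, hs⟩
    have h2 : rkn hW ((n :: r).reverse) < rkn hW' (mlgo hW hW' sb r) :=
      lt_of_lt_of_le (rkn_lt hW hrel) ih3
    obtain ⟨w, hwrel, hwle⟩ := rkn_exists hW' h2
    have hex : ∃ w, w ∈ T' ∧ SP (mlgo hW hW' sb r) w ∧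
        rkn hW ((n :: r).reverse) ≤ rkn hW' w := ⟨w, hwrel.2, hwrel.1, hwle⟩
    have hspec := Classical.epsilon_spec hex
    exact ⟨hspec.1, ih2.trans hspec.2.1.1, hspec.2.2⟩

theorem ml {T T' : Set (List ℕ)} (hT : IsTree T) (hW : WellFounded (rel T))
    (hW' : WellFounded (rel T')) {sb : List ℕ} (hsb : sb ∈ T')
    (hle : rkn hW [] ≤ rkn hW' sb) :
    ∃ F, Hom F T T' ∧ F [] = sb ∧ ∀ s ∈ T, sb <+: F s := by
  classical
  refine ⟨fun s => mlgo hW hW' sb s.reverse, ?_⟩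
  set F : List ℕ → List ℕ := fun s => mlgo hW hW' sb s.reverse with hFdef
  have inv : ∀ s ∈ T, F s ∈ T' ∧ sb <+: F s ∧ rkn hW s ≤ rkn hW' (F s) := by
    intro s hs
    have := mlgo_spec hT hW hW' hsb hle s.reverse (by rwa [List.reverse_reverse])
    rwa [List.reverse_reverse] at this
  have step : ∀ s ∈ T, ∀ n : ℕ, s ++ [n] ∈ T → SP (F s) (F (s ++ [n])) := by
    intro s hs n hsn
    have hrel : rel T (s ++ [n]) s := ⟨⟨⟨[n], rfl⟩, by simp⟩, hsn⟩
    have h2 : rkn hW (s ++ [n]) < rkn hW' (F s) :=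
      lt_of_lt_of_le (rkn_lt hW hrel) (inv s hs).2.2
    obtain ⟨w, hwrel, hwle⟩ := rkn_exists hW' h2
    have hex : ∃ w, w ∈ T' ∧ SP (mlgo hW hW' sb s.reverse) w ∧
        rkn hW ((n :: s.reverse).reverse) ≤ rkn hW' w := by
      refine ⟨w, hwrel.2, hwrel.1, ?_⟩
      simpa using hwle
    have hspec := Classical.epsilon_spec hex
    have hFsn : F (s ++ [n]) = Classical.epsilon (fun w => w ∈ T' ∧
        SP (mlgo hW hW' sb s.reverse) w ∧ rkn hW ((n :: s.reverse).reverse) ≤ rkn hW' w) := by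
      have : (s ++ [n]).reverse = n :: s.reverse := by simp
      rw [hFdef]; simp only [this]; rfl
    rw [hFsn]
    exact hspec.2.1
  have main : ∀ N, ∀ t ∈ T, t.length ≤ N → ∀ s ∈ T, SP s t → SP (F s) (F t) := by
    intro N
    induction N with
    | zero =>
      intro t ht hlen s hs hsp
      exact absurd hsp.2 (by omega)
    | succ N ihN =>
      intro t ht hlen s hs hsp
      rcases t.eq_nil_or_concat with rfl | ⟨t0, n, rfl⟩
      · exact absurd hsp.2 (by simp)
      · simp only [List.concat_eq_append] at ht hsp hlen ⊢
        have ht0 : t0 ∈ T := hT ⟨[n], rfl⟩ ht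
        have hlt : s.length < t0.length + 1 := by simpa using hsp.2
        have hsle : s.length ≤ t0.length := by omega
        have hspre : s <+: t0 :=
          List.prefix_of_prefix_length_le hsp.1 ⟨[n], rfl⟩ hsle
        rcases eq_or_ne s t0 with rfl | hne
        · exact step s hs n ht
        · have h1 : SP s t0 :=
            ⟨hspre, lt_of_le_of_ne hsle (fun h => hne (hspre.eq_of_length h))⟩
          have hl0 : t0.length ≤ N := by
            have : t0.length + 1 ≤ N + 1 := by simpa using hlen
            omega
          exact (ihN t0 ht0 hl0 s hs h1).trans (step t0 ht0 n ht)
  refine ⟨⟨fun s hs => (inv s hs).1, fun s t hs ht hsp => main t.length t ht le_rfl s hs hsp⟩,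
    rfl, fun s hs => (inv s hs).2.1⟩

/-! ### dichotomy and exclusivity -/

theorem nil_mem_of_mem {T : Set (List ℕ)} (hT : IsTree T) {s : List ℕ} (hs : s ∈ T) :
    [] ∈ T := hT (List.nil_prefix) hs

theorem total {T T' : Set (List ℕ)} (hT : IsTree T) (hT' : IsTree T') (hwf : ¬ IllF T) :
    Lt T T' ∨ Leq T' T := by
  classical
  by_cases hi' : IllF T'
  · exact Or.inl (illF_lt hi')
  have hW := wf_rel hT hwf
  have hW' := wf_rel hT' hi'
  by_cases h0' : ([] : List ℕ) ∈ T'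
  · by_cases h0 : ([] : List ℕ) ∈ T
    · by_cases hcmp : rkn hW' [] ≤ rkn hW []
      · obtain ⟨F, hF, -, -⟩ := ml hT' hW' hW h0 hcmp
        exact Or.inr ⟨F, hF⟩
      · push_neg at hcmp
        obtain ⟨c, hcrel, hcle⟩ := rkn_exists hW' hcmp
        obtain ⟨F, hF, hF0, hFpre⟩ := ml hT hW hW' hcrel.2 hcle
        refine Or.inl ⟨h0', F, hF, fun s hs => ?_⟩
        have hc : c ≠ [] := hcrel.1.ne_nil
        intro he
        have := hFpre s hs
        rw [he] at this
        exact hc (List.prefix_nil.1 this)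
    · refine Or.inl ⟨h0', id, ⟨fun s hs => absurd (nil_mem_of_mem hT hs) h0, ?_⟩, ?_⟩
      · intro s t hs _ _; exact absurd (nil_mem_of_mem hT hs) h0
      · intro s hs; exact absurd (nil_mem_of_mem hT hs) h0
  · refine Or.inr ⟨id, fun s hs => absurd (nil_mem_of_mem hT' hs) h0', ?_⟩
    intro s t hs _ _; exact absurd (nil_mem_of_mem hT' hs) h0'

theorem not_lt_and_leq {T T' : Set (List ℕ)} (hT : IsTree T) (hT' : IsTree T')
    (hwf : ¬ IllF T) (h1 : Lt T T') (h2 : Leq T' T) : False := by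
  classical
  have hwf' : ¬ IllF T' := fun hi => hwf (leq_illF hT h2 hi)
  have hW := wf_rel hT hwf
  have hW' := wf_rel hT' hwf'
  obtain ⟨h0', F, hF, hne⟩ := h1
  obtain ⟨G, hG⟩ := h2
  by_cases h0 : ([] : List ℕ) ∈ T
  · have e1 : rkn hW [] ≤ rkn hW' (F []) := hom_rkn_le hW hW' hF [] h0
    have e2 : rkn hW' (F []) < rkn hW' [] :=
      rkn_lt hW' ⟨sp_nil (hne [] h0), hF.1 [] h0⟩
    have e3 : rkn hW' [] ≤ rkn hW (G []) := hom_rkn_le hW' hW hG [] h0'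
    have e4 : rkn hW (G []) ≤ rkn hW [] := by
      rcases eq_or_ne (G []) [] with he | he
      · rw [he]
      · exact le_of_lt (rkn_lt hW ⟨sp_nil he, hG.1 [] h0'⟩)
    exact absurd (lt_of_le_of_lt e1 (lt_of_lt_of_le e2 (le_trans e3 e4))) (lt_irrefl _)
  · exact h0 (nil_mem_of_mem hT (hG.1 [] h0'))

/-! ### cylinders and point trees -/

theorem pre_getD {b : ℕ → ℕ} {k i : ℕ} (h : i < k) : (pre b k).getD i 0 = b i := by
  rw [List.getD_eq_getElem _ _ (by simpa using h), pre_getElem _ h]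

theorem pre_congr {b c : ℕ → ℕ} {k i : ℕ} (h : pre b k = pre c k) (hik : i < k) :
    b i = c i := by
  rw [← pre_getD (b := b) hik, h, pre_getD hik]

def cyl (s : List ℕ) : Set (ℕ → ℕ) := {b | pre b s.length = s}

theorem self_mem_cyl (b : ℕ → ℕ) (k : ℕ) : b ∈ cyl (pre b k) := by
  show pre b (pre b k).length = pre b k
  rw [pre_length]

theorem cyl_nonempty (s : List ℕ) : (cyl s).Nonempty := by
  refine ⟨fun i => s.getD i 0, ?_⟩
  show pre _ s.length = s
  apply List.ext_getElem (by simp)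
  intro i h1 h2
  rw [pre_getElem _ (by simpa using h1), List.getD_eq_getElem _ _ h2]

theorem cyl_mono {s t : List ℕ} (h : s <+: t) : cyl t ⊆ cyl s := by
  intro b hb
  obtain ⟨r, rfl⟩ := h
  have hl : s.length ≤ (s ++ r).length := by simp
  have hb' : pre b (s ++ r).length = s ++ r := hb
  show pre b s.length = s
  have := congrArg (fun l => List.take s.length l) hb'
  simp only [pre_take _ _ _ hl, List.take_left] at this
  exact this

section PointTree

variable {Z : Type*} [MetricSpace Z]

def Tr (f : (ℕ → ℕ) → Z) (z : Z) : Set (List ℕ) :=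
  {s | Metric.infDist z (f '' cyl s) ≤ (1 / 2 : ℝ) ^ s.length}

theorem tr_tree (f : (ℕ → ℕ) → Z) (z : Z) : IsTree (Tr f z) := by
  intro s t hst ht
  have h1 : Metric.infDist z (f '' cyl s) ≤ Metric.infDist z (f '' cyl t) :=
    Metric.infDist_le_infDist_of_subset (image_mono (f := f) (cyl_mono hst))
      ((cyl_nonempty t).image f)
  refine le_trans h1 (le_trans ht ?_)
  exact pow_le_pow_of_le_one (by norm_num) (by norm_num) hst.length_le

theorem tr_closed (f : (ℕ → ℕ) → Z) (s : List ℕ) : IsClosed {z : Z | s ∈ Tr f z} := by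
  have he : {z : Z | s ∈ Tr f z} =
      (fun z => Metric.infDist z (f '' cyl s)) ⁻¹' Iic ((1 / 2 : ℝ) ^ s.length) := rfl
  rw [he]
  exact IsClosed.preimage (Metric.continuous_infDist_pt _) isClosed_Iic

theorem tr_illF {f : (ℕ → ℕ) → Z} (hf : Continuous f) (z : Z) :
    IllF (Tr f z) ↔ z ∈ range f := by
  constructor
  · rintro ⟨b, hb⟩
    have key : ∀ k : ℕ, ∃ b' : ℕ → ℕ, pre b' k = pre b k ∧
        dist z (f b') < 2 * (1 / 2 : ℝ) ^ k := by
      intro k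
      have h1 := hb k
      have h2 : Metric.infDist z (f '' cyl (pre b k)) < 2 * (1 / 2 : ℝ) ^ k := by
        have hpos : (0 : ℝ) < (1 / 2 : ℝ) ^ k := pow_pos (by norm_num) k
        calc Metric.infDist z (f '' cyl (pre b k)) ≤ (1 / 2 : ℝ) ^ (pre b k).length := h1
        _ = (1 / 2 : ℝ) ^ k := by rw [pre_length]
        _ < 2 * (1 / 2 : ℝ) ^ k := by nlinarith
      obtain ⟨y, hy, hdy⟩ := (Metric.infDist_lt_iff ((cyl_nonempty _).image f)).1 h2
      obtain ⟨b', hb', rfl⟩ := hy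
      refine ⟨b', ?_, hdy⟩
      have : pre b' (pre b k).length = pre b k := hb'
      rwa [pre_length] at this
    choose g hg1 hg2 using key
    have htend : Filter.Tendsto g Filter.atTop (nhds b) := by
      rw [tendsto_pi_nhds]
      intro i
      refine Filter.Tendsto.congr' ?_ (tendsto_const_nhds (α := ℕ) (x := b i))
      filter_upwards [Filter.eventually_ge_atTop (i + 1)] with k hk
      exact (pre_congr (hg1 k) (by omega)).symm
    have h2 : Filter.Tendsto (fun k => f (g k)) Filter.atTop (nhds (f b)) :=
      (hf.tendsto b).comp htend
    have h3 : Filter.Tendsto (fun k => dist (f (g k)) z) Filter.atTop (nhds 0) := by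
      apply squeeze_zero (fun k => dist_nonneg) (fun k => (dist_comm z (f (g k)) ▸ (hg2 k).le))
      have hp : Filter.Tendsto (fun k : ℕ => (1 / 2 : ℝ) ^ k) Filter.atTop (nhds 0) :=
        tendsto_pow_atTop_nhds_zero_of_lt_one (by norm_num) (by norm_num)
      simpa using hp.const_mul 2
    have h4 : Filter.Tendsto (fun k => f (g k)) Filter.atTop (nhds z) := by
      rw [tendsto_iff_dist_tendsto_zero]
      exact h3
    exact ⟨b, (tendsto_nhds_unique h2 h4)⟩
  · rintro ⟨b, rfl⟩
    refine ⟨b, fun k => ?_⟩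
    show Metric.infDist (f b) (f '' cyl (pre b k)) ≤ _
    have h1 : Metric.infDist (f b) (f '' cyl (pre b k)) ≤ dist (f b) (f b) :=
      Metric.infDist_le_dist_of_mem (mem_image_of_mem f (self_mem_cyl b k))
    simp only [dist_self] at h1
    exact le_trans h1 (by positivity)

end PointTree

/-! ### coded trees -/

def cod (t : ℕ → ℕ) : Set (List ℕ) :=
  {s | ∀ p, p <+: s → t (Encodable.encode p) = 0}

theorem cod_tree (t : ℕ → ℕ) : IsTree (cod t) :=
  fun s u hsu hu p hp => hu p (hp.trans hsu)

theorem mem_cod_iff_finite (s : List ℕ) (t : ℕ → ℕ) :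
    s ∈ cod t ↔ ∀ k ∈ Finset.range (s.length + 1), t (Encodable.encode (s.take k)) = 0 := by
  constructor
  · intro h k _
    exact h _ (List.take_prefix _ _)
  · intro h p hp
    obtain ⟨r, rfl⟩ := hp
    have hkp : p.length ∈ Finset.range ((p ++ r).length + 1) := by simp
    have := h p.length hkp
    rwa [List.take_left] at this

theorem cod_clopen (s : List ℕ) : IsClopen {t : ℕ → ℕ | s ∈ cod t} := by
  have he : {t : ℕ → ℕ | s ∈ cod t} =
      ⋂ k ∈ Finset.range (s.length + 1),
        {t : ℕ → ℕ | t (Encodable.encode (s.take k)) = 0} := by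
    ext t
    rw [mem_setOf_eq, mem_cod_iff_finite]
    simp only [Set.mem_iInter, mem_setOf_eq]
  rw [he]
  have hc : ∀ m : ℕ, IsClopen {t : ℕ → ℕ | t m = 0} := by
    intro m
    exact (isClopen_discrete ({0} : Set ℕ)).preimage (continuous_apply m)
  constructor
  · exact isClosed_biInter (fun k _ => (hc _).isClosed)
  · exact (Finset.range (s.length + 1)).finite_toSet.isOpen_biInter (fun k _ => (hc _).isOpen)

open Classical in
noncomputable def chi (T : Set (List ℕ)) : ℕ → ℕ :=
  fun n => if (Denumerable.ofNat (List ℕ) n) ∈ T then 0 else 1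

theorem cod_chi {T : Set (List ℕ)} (hT : IsTree T) : cod (chi T) = T := by
  classical
  ext s
  constructor
  · intro h
    have hs := h s List.prefix_rfl
    simp only [chi, Denumerable.ofNat_encode] at hs
    by_cases hmem : s ∈ T
    · exact hmem
    · rw [if_neg hmem] at hs; exact absurd hs one_ne_zero
  · intro hs p hp
    have hp' : p ∈ T := hT hp hs
    simp [chi, Denumerable.ofNat_encode, hp']

/-! ### analytic set machinery -/

open MeasureTheory

theorem analytic_union2 {α : Type*} [TopologicalSpace α] {s t : Set α}
    (hs : AnalyticSet s) (ht : AnalyticSet t) : AnalyticSet (s ∪ t) := by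
  rw [Set.union_eq_iUnion]
  exact AnalyticSet.iUnion (fun b => by cases b <;> simpa)

theorem analytic_inter2 {α : Type*} [TopologicalSpace α] [T2Space α] {s t : Set α}
    (hs : AnalyticSet s) (ht : AnalyticSet t) : AnalyticSet (s ∩ t) := by
  rw [Set.inter_eq_iInter]
  exact AnalyticSet.iInter (fun b => by cases b <;> simpa)

theorem analyticSet_of_isOpen {α : Type*} [TopologicalSpace α] [PolishSpace α] {U : Set α}
    (hU : IsOpen U) : AnalyticSet U := by
  have := hU.analyticSet_image (f := id) continuous_id
  simpa using this

theorem analyticSet_preimage {W V : Type*} [TopologicalSpace W] [PolishSpace W]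
    [TopologicalSpace V] [T2Space V] {A : Set V} (hA : AnalyticSet A)
    {g : W → V} (hg : Continuous g) : AnalyticSet (g ⁻¹' A) := by
  rw [MeasureTheory.AnalyticSet] at hA
  rcases hA with h | ⟨f, hf, rfl⟩
  · rw [h]; simpa using analyticSet_empty
  · have hclosed : IsClosed {p : W × (ℕ → ℕ) | f p.2 = g p.1} :=
      isClosed_eq (hf.comp continuous_snd) (hg.comp continuous_fst)
    have heq : g ⁻¹' range f = Prod.fst '' {p : W × (ℕ → ℕ) | f p.2 = g p.1} := by
      ext w
      simp only [mem_preimage, Set.mem_range, mem_image, mem_setOf_eq, Prod.exists]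
      constructor
      · rintro ⟨b, hb⟩; exact ⟨w, b, hb, rfl⟩
      · rintro ⟨w', b, hb, rfl⟩; exact ⟨b, hb⟩
    rw [heq]
    exact hclosed.analyticSet.image_of_continuous continuous_fst

/-! ### coding of tree comparison maps -/

theorem lt_code (T T' : Set (List ℕ)) :
    Lt T T' ↔ [] ∈ T' ∧ ∃ g : ℕ → ℕ,
      (∀ s, s ∈ T → (Denumerable.ofNat (List ℕ) (g (Encodable.encode s)) ∈ T' ∧
        Denumerable.ofNat (List ℕ) (g (Encodable.encode s)) ≠ [])) ∧
      (∀ s t, s ∈ T → t ∈ T → SP s t →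
        SP (Denumerable.ofNat (List ℕ) (g (Encodable.encode s)))
          (Denumerable.ofNat (List ℕ) (g (Encodable.encode t)))) := by
  constructor
  · rintro ⟨h0, F, hF, hne⟩
    refine ⟨h0, fun n => Encodable.encode (F (Denumerable.ofNat (List ℕ) n)), ?_, ?_⟩
    · intro s hs
      simp only [Denumerable.ofNat_encode]
      exact ⟨hF.1 s hs, hne s hs⟩
    · intro s t hs ht hst
      simp only [Denumerable.ofNat_encode]
      exact hF.2 s t hs ht hst
  · rintro ⟨h0, g, h1, h2⟩
    exact ⟨h0, fun s => Denumerable.ofNat (List ℕ) (g (Encodable.encode s)),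
      ⟨fun s hs => (h1 s hs).1, h2⟩, fun s hs => (h1 s hs).2⟩

theorem leq_code (T T' : Set (List ℕ)) :
    Leq T T' ↔ ∃ g : ℕ → ℕ,
      (∀ s, s ∈ T → Denumerable.ofNat (List ℕ) (g (Encodable.encode s)) ∈ T') ∧
      (∀ s t, s ∈ T → t ∈ T → SP s t →
        SP (Denumerable.ofNat (List ℕ) (g (Encodable.encode s)))
          (Denumerable.ofNat (List ℕ) (g (Encodable.encode t)))) := by
  constructor
  · rintro ⟨F, hF⟩
    refine ⟨fun n => Encodable.encode (F (Denumerable.ofNat (List ℕ) n)), ?_, ?_⟩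
    · intro s hs
      simp only [Denumerable.ofNat_encode]
      exact hF.1 s hs
    · intro s t hs ht hst
      simp only [Denumerable.ofNat_encode]
      exact hF.2 s t hs ht hst
  · rintro ⟨g, h1, h2⟩
    exact ⟨fun s => Denumerable.ofNat (List ℕ) (g (Encodable.encode s)), h1, h2⟩

section Analytic

variable {Z : Type*} [MetricSpace Z] [SecondCountableTopology Z] [CompleteSpace Z]

theorem analytic_ltSet (f : (ℕ → ℕ) → Z) :
    AnalyticSet {p : (ℕ → ℕ) × Z | Lt (cod p.1) (Tr f p.2)} := by
  classical
  haveI : PolishSpace ((ℕ → ℕ) × Z) := inferInstance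
  haveI : PolishSpace (((ℕ → ℕ) × Z) × (ℕ → ℕ)) := inferInstance
  set dec : ℕ → List ℕ := Denumerable.ofNat (List ℕ) with hdec
  set enc : List ℕ → ℕ := Encodable.encode with henc
  set E : Set (((ℕ → ℕ) × Z) × (ℕ → ℕ)) :=
    {q | [] ∈ Tr f q.1.2 ∧
      (∀ s, s ∈ cod q.1.1 → (dec (q.2 (enc s)) ∈ Tr f q.1.2 ∧ dec (q.2 (enc s)) ≠ [])) ∧
      (∀ s t, s ∈ cod q.1.1 → t ∈ cod q.1.1 → SP s t →
        SP (dec (q.2 (enc s))) (dec (q.2 (enc t))))} with hE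
  have himg : {p : (ℕ → ℕ) × Z | Lt (cod p.1) (Tr f p.2)} = Prod.fst '' E := by
    ext p
    constructor
    · intro hp
      rw [mem_setOf_eq, lt_code] at hp
      obtain ⟨h0, g, h1, h2⟩ := hp
      exact ⟨(p, g), ⟨h0, h1, h2⟩, rfl⟩
    · rintro ⟨⟨pp, g⟩, hq, rfl⟩
      rw [mem_setOf_eq, lt_code]
      exact ⟨hq.1, g, hq.2.1, hq.2.2⟩
  rw [himg]
  have hE0 : AnalyticSet {q : ((ℕ → ℕ) × Z) × (ℕ → ℕ) | [] ∈ Tr f q.1.2} :=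
    (IsClosed.preimage continuous_fst.snd (tr_closed f [])).analyticSet
  have hE1 : ∀ s : List ℕ, AnalyticSet {q : ((ℕ → ℕ) × Z) × (ℕ → ℕ) |
      s ∈ cod q.1.1 → (dec (q.2 (enc s)) ∈ Tr f q.1.2 ∧ dec (q.2 (enc s)) ≠ [])} := by
    intro s
    have heq : {q : ((ℕ → ℕ) × Z) × (ℕ → ℕ) |
        s ∈ cod q.1.1 → (dec (q.2 (enc s)) ∈ Tr f q.1.2 ∧ dec (q.2 (enc s)) ≠ [])} =
        {q : ((ℕ → ℕ) × Z) × (ℕ → ℕ) | s ∉ cod q.1.1} ∪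
        ⋃ (w : {w : List ℕ // w ≠ []}),
          ({q : ((ℕ → ℕ) × Z) × (ℕ → ℕ) | q.2 (enc s) = enc w.1} ∩
           {q | w.1 ∈ Tr f q.1.2}) := by
      ext q
      simp only [mem_setOf_eq, Set.mem_union, Set.mem_iUnion, Set.mem_inter_iff]
      constructor
      · intro h
        by_cases hm : s ∈ cod q.1.1
        · obtain ⟨h1, h2⟩ := h hm
          exact Or.inr ⟨⟨dec (q.2 (enc s)), h2⟩, (Denumerable.encode_ofNat _).symm, h1⟩
        · exact Or.inl hm
      · rintro (h | ⟨⟨w, hw⟩, hq1, hq2⟩) hm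
        · exact absurd hm h
        · rw [hq1]
          simp only [hdec, henc, Denumerable.ofNat_encode]
          exact ⟨hq2, hw⟩
    rw [heq]
    refine analytic_union2 (analyticSet_of_isOpen (((cod_clopen s).compl.isOpen).preimage
      continuous_fst.fst)) (AnalyticSet.iUnion fun w => ?_)
    refine IsClosed.analyticSet (IsClosed.inter ?_ ?_)
    · exact IsClosed.preimage ((continuous_apply (enc s)).comp continuous_snd) isClosed_singleton
    · exact IsClosed.preimage continuous_fst.snd (tr_closed f w.1)
  have hE2 : ∀ st : List ℕ × List ℕ, AnalyticSet {q : ((ℕ → ℕ) × Z) × (ℕ → ℕ) |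
      st.1 ∈ cod q.1.1 → st.2 ∈ cod q.1.1 → SP st.1 st.2 →
        SP (dec (q.2 (enc st.1))) (dec (q.2 (enc st.2)))} := by
    intro st
    have heq : {q : ((ℕ → ℕ) × Z) × (ℕ → ℕ) |
        st.1 ∈ cod q.1.1 → st.2 ∈ cod q.1.1 → SP st.1 st.2 →
          SP (dec (q.2 (enc st.1))) (dec (q.2 (enc st.2)))} =
        ({q : ((ℕ → ℕ) × Z) × (ℕ → ℕ) | st.1 ∉ cod q.1.1} ∪
         {q : ((ℕ → ℕ) × Z) × (ℕ → ℕ) | st.2 ∉ cod q.1.1}) ∪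
        ⋃ (ab : {ab : ℕ × ℕ // SP st.1 st.2 → SP (dec ab.1) (dec ab.2)}),
          ({q : ((ℕ → ℕ) × Z) × (ℕ → ℕ) | q.2 (enc st.1) = ab.1.1} ∩
           {q | q.2 (enc st.2) = ab.1.2}) := by
      ext q
      simp only [mem_setOf_eq, Set.mem_union, Set.mem_iUnion, Set.mem_inter_iff]
      constructor
      · intro h
        by_cases hm1 : st.1 ∈ cod q.1.1
        · by_cases hm2 : st.2 ∈ cod q.1.1
          · exact Or.inr ⟨⟨(q.2 (enc st.1), q.2 (enc st.2)), fun hsp => h hm1 hm2 hsp⟩, rfl, rfl⟩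
          · exact Or.inl (Or.inr hm2)
        · exact Or.inl (Or.inl hm1)
      · rintro ((h | h) | ⟨⟨ab, hab⟩, hq1, hq2⟩) hm1 hm2 hsp
        · exact absurd hm1 h
        · exact absurd hm2 h
        · rw [hq1, hq2]
          exact hab hsp
    rw [heq]
    refine analytic_union2 (analytic_union2
      (analyticSet_of_isOpen (((cod_clopen st.1).compl.isOpen).preimage continuous_fst.fst))
      (analyticSet_of_isOpen (((cod_clopen st.2).compl.isOpen).preimage continuous_fst.fst)))
      (AnalyticSet.iUnion fun ab => ?_)
    refine IsClosed.analyticSet (IsClosed.inter ?_ ?_)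
    · exact IsClosed.preimage ((continuous_apply (enc st.1)).comp continuous_snd)
        isClosed_singleton
    · exact IsClosed.preimage ((continuous_apply (enc st.2)).comp continuous_snd)
        isClosed_singleton
  have hEdecomp : E = {q : ((ℕ → ℕ) × Z) × (ℕ → ℕ) | [] ∈ Tr f q.1.2} ∩
      ((⋂ s : List ℕ, {q : ((ℕ → ℕ) × Z) × (ℕ → ℕ) |
        s ∈ cod q.1.1 → (dec (q.2 (enc s)) ∈ Tr f q.1.2 ∧ dec (q.2 (enc s)) ≠ [])}) ∩
       (⋂ st : List ℕ × List ℕ, {q : ((ℕ → ℕ) × Z) × (ℕ → ℕ) |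
        st.1 ∈ cod q.1.1 → st.2 ∈ cod q.1.1 → SP st.1 st.2 →
          SP (dec (q.2 (enc st.1))) (dec (q.2 (enc st.2)))})) := by
    ext q
    constructor
    · intro hq
      obtain ⟨h0, h1, h2⟩ := hq
      refine ⟨h0, ?_, ?_⟩
      · rw [Set.mem_iInter]; exact fun s => h1 s
      · rw [Set.mem_iInter]; exact fun st => h2 st.1 st.2
    · rintro ⟨h0, h1, h2⟩
      rw [Set.mem_iInter] at h1
      rw [Set.mem_iInter] at h2
      exact ⟨h0, fun s => h1 s, fun s t => h2 (s, t)⟩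
  have hEan : AnalyticSet E := by
    rw [hEdecomp]
    exact analytic_inter2 hE0 (analytic_inter2 (AnalyticSet.iInter hE1) (AnalyticSet.iInter hE2))
  exact hEan.image_of_continuous continuous_fst

theorem analytic_leqSet (f : (ℕ → ℕ) → Z) (T : Set (List ℕ)) :
    AnalyticSet {z : Z | Leq (Tr f z) T} := by
  classical
  haveI : PolishSpace (Z × (ℕ → ℕ)) := inferInstance
  set dec : ℕ → List ℕ := Denumerable.ofNat (List ℕ) with hdec
  set enc : List ℕ → ℕ := Encodable.encode with henc
  set E : Set (Z × (ℕ → ℕ)) :=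
    {q | (∀ s, s ∈ Tr f q.1 → dec (q.2 (enc s)) ∈ T) ∧
      (∀ s t, s ∈ Tr f q.1 → t ∈ Tr f q.1 → SP s t →
        SP (dec (q.2 (enc s))) (dec (q.2 (enc t))))} with hE
  have himg : {z : Z | Leq (Tr f z) T} = Prod.fst '' E := by
    ext z
    constructor
    · intro hz
      rw [mem_setOf_eq, leq_code] at hz
      obtain ⟨g, h1, h2⟩ := hz
      exact ⟨(z, g), ⟨h1, h2⟩, rfl⟩
    · rintro ⟨⟨z', g⟩, hq, rfl⟩
      rw [mem_setOf_eq, leq_code]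
      exact ⟨g, hq.1, hq.2⟩
  rw [himg]
  have hE1 : ∀ s : List ℕ, AnalyticSet {q : Z × (ℕ → ℕ) |
      s ∈ Tr f q.1 → dec (q.2 (enc s)) ∈ T} := by
    intro s
    have heq : {q : Z × (ℕ → ℕ) | s ∈ Tr f q.1 → dec (q.2 (enc s)) ∈ T} =
        {q : Z × (ℕ → ℕ) | s ∈ Tr f q.1}ᶜ ∪
        ⋃ (w : {w : List ℕ // w ∈ T}), {q : Z × (ℕ → ℕ) | q.2 (enc s) = enc w.1} := by
      ext q
      simp only [mem_setOf_eq, Set.mem_union, Set.mem_iUnion, Set.mem_compl_iff]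
      constructor
      · intro h
        by_cases hm : s ∈ Tr f q.1
        · exact Or.inr ⟨⟨dec (q.2 (enc s)), h hm⟩, (Denumerable.encode_ofNat _).symm⟩
        · exact Or.inl hm
      · rintro (h | ⟨⟨w, hw⟩, hq1⟩) hm
        · exact absurd hm h
        · rw [hq1]
          simpa only [hdec, henc, Denumerable.ofNat_encode] using hw
    rw [heq]
    refine analytic_union2 (analyticSet_of_isOpen ?_) (AnalyticSet.iUnion fun w => ?_)
    · exact (IsClosed.preimage continuous_fst (tr_closed f s)).isOpen_compl
    · exact (IsClosed.preimage ((continuous_apply (enc s)).comp continuous_snd)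
        isClosed_singleton).analyticSet
  have hE2 : ∀ st : List ℕ × List ℕ, AnalyticSet {q : Z × (ℕ → ℕ) |
      st.1 ∈ Tr f q.1 → st.2 ∈ Tr f q.1 → SP st.1 st.2 →
        SP (dec (q.2 (enc st.1))) (dec (q.2 (enc st.2)))} := by
    intro st
    have heq : {q : Z × (ℕ → ℕ) | st.1 ∈ Tr f q.1 → st.2 ∈ Tr f q.1 → SP st.1 st.2 →
        SP (dec (q.2 (enc st.1))) (dec (q.2 (enc st.2)))} =
        ({q : Z × (ℕ → ℕ) | st.1 ∈ Tr f q.1}ᶜ ∪ {q : Z × (ℕ → ℕ) | st.2 ∈ Tr f q.1}ᶜ) ∪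
        ⋃ (ab : {ab : ℕ × ℕ // SP st.1 st.2 → SP (dec ab.1) (dec ab.2)}),
          ({q : Z × (ℕ → ℕ) | q.2 (enc st.1) = ab.1.1} ∩
           {q | q.2 (enc st.2) = ab.1.2}) := by
      ext q
      simp only [mem_setOf_eq, Set.mem_union, Set.mem_iUnion, Set.mem_inter_iff,
        Set.mem_compl_iff]
      constructor
      · intro h
        by_cases hm1 : st.1 ∈ Tr f q.1
        · by_cases hm2 : st.2 ∈ Tr f q.1
          · exact Or.inr ⟨⟨(q.2 (enc st.1), q.2 (enc st.2)), fun hsp => h hm1 hm2 hsp⟩, rfl, rfl⟩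
          · exact Or.inl (Or.inr hm2)
        · exact Or.inl (Or.inl hm1)
      · rintro ((h | h) | ⟨⟨ab, hab⟩, hq1, hq2⟩) hm1 hm2 hsp
        · exact absurd hm1 h
        · exact absurd hm2 h
        · rw [hq1, hq2]
          exact hab hsp
    rw [heq]
    refine analytic_union2 (analytic_union2
      (analyticSet_of_isOpen (IsClosed.preimage continuous_fst (tr_closed f st.1)).isOpen_compl)
      (analyticSet_of_isOpen (IsClosed.preimage continuous_fst (tr_closed f st.2)).isOpen_compl))
      (AnalyticSet.iUnion fun ab => ?_)
    refine IsClosed.analyticSet (IsClosed.inter ?_ ?_)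
    · exact IsClosed.preimage ((continuous_apply (enc st.1)).comp continuous_snd)
        isClosed_singleton
    · exact IsClosed.preimage ((continuous_apply (enc st.2)).comp continuous_snd)
        isClosed_singleton
  have hEdecomp : E = (⋂ s : List ℕ, {q : Z × (ℕ → ℕ) |
      s ∈ Tr f q.1 → dec (q.2 (enc s)) ∈ T}) ∩
      (⋂ st : List ℕ × List ℕ, {q : Z × (ℕ → ℕ) |
        st.1 ∈ Tr f q.1 → st.2 ∈ Tr f q.1 → SP st.1 st.2 →
          SP (dec (q.2 (enc st.1))) (dec (q.2 (enc st.2)))}) := by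
    ext q
    constructor
    · intro hq
      obtain ⟨h1, h2⟩ := hq
      constructor
      · rw [Set.mem_iInter]; exact fun s => h1 s
      · rw [Set.mem_iInter]; exact fun st => h2 st.1 st.2
    · rintro ⟨h1, h2⟩
      rw [Set.mem_iInter] at h1
      rw [Set.mem_iInter] at h2
      exact ⟨fun s => h1 s, fun s t => h2 (s, t)⟩
  have hEan : AnalyticSet E := by
    rw [hEdecomp]
    exact analytic_inter2 (AnalyticSet.iInter hE1) (AnalyticSet.iInter hE2)
  exact hEan.image_of_continuous continuous_fst

end Analytic

/-! ### the universal wellfounded tree argument -/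

def Vt (q : (ℕ → ℕ) → (ℕ → ℕ)) : Set (List ℕ) :=
  {v | ∃ w : ℕ → ℕ, pre w v.length = v.map (fun n => (Nat.unpair n).1) ∧
    (v.map (fun n => (Nat.unpair n).2)) ∈ cod (q w)}

theorem Vt_tree (q : (ℕ → ℕ) → (ℕ → ℕ)) : IsTree (Vt q) := by
  rintro p v hpv ⟨w, hw1, hw2⟩
  obtain ⟨r, rfl⟩ := hpv
  refine ⟨w, ?_, ?_⟩
  · have h1 : p.length ≤ (p ++ r).length := by simp
    have := congrArg (fun l => List.take p.length l) hw1
    simp only [pre_take _ _ _ h1, List.map_append] at this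
    rw [this]
    rw [show p.length = (p.map (fun n => (Nat.unpair n).1)).length from (by simp)]
    rw [List.take_left]
  · exact cod_tree (q w) (by simp [List.map_append]) hw2

theorem Vt_wf {q : (ℕ → ℕ) → (ℕ → ℕ)} (hq : Continuous q)
    (hn : ∀ w, ¬ IllF (cod (q w))) : ¬ IllF (Vt q) := by
  rintro ⟨c, hc⟩
  set wI : ℕ → ℕ := fun i => (Nat.unpair (c i)).1 with hwI
  set b : ℕ → ℕ := fun i => (Nat.unpair (c i)).2 with hb
  have key : ∀ k, ∃ w : ℕ → ℕ, pre w k = pre wI k ∧ pre b k ∈ cod (q w) := by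
    intro k
    obtain ⟨w, hw1, hw2⟩ := hc k
    have hmap1 : (pre c k).map (fun n => (Nat.unpair n).1) = pre wI k := by
      simp [pre, List.map_ofFn]; rfl
    have hmap2 : (pre c k).map (fun n => (Nat.unpair n).2) = pre b k := by
      simp [pre, List.map_ofFn]; rfl
    rw [pre_length] at hw1
    rw [hmap1] at hw1
    rw [hmap2] at hw2
    exact ⟨w, hw1, hw2⟩
  choose W hW1 hW2 using key
  have htend : Filter.Tendsto W Filter.atTop (nhds wI) := by
    rw [tendsto_pi_nhds]
    intro i
    refine Filter.Tendsto.congr' ?_ (tendsto_const_nhds (x := wI i))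
    filter_upwards [Filter.eventually_ge_atTop (i + 1)] with k hk
    exact (pre_congr (hW1 k) (by omega)).symm
  have hqt : Filter.Tendsto (fun k => q (W k)) Filter.atTop (nhds (q wI)) :=
    (hq.tendsto wI).comp htend
  apply hn wI
  refine ⟨b, fun m => ?_⟩
  intro p hp
  -- show q wI (Encodable.encode p) = 0
  have hcoord : Filter.Tendsto (fun k => q (W k) (Encodable.encode p)) Filter.atTop
      (nhds (q wI (Encodable.encode p))) := by
    have := tendsto_pi_nhds.1 hqt (Encodable.encode p)
    exact this
  have hopen : {x : ℕ | x = q wI (Encodable.encode p)} ∈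
      nhds (q wI (Encodable.encode p)) := by
    have : IsOpen {x : ℕ | x = q wI (Encodable.encode p)} := isOpen_discrete _
    exact this.mem_nhds rfl
  have hev1 : ∀ᶠ k in Filter.atTop, q (W k) (Encodable.encode p) =
      q wI (Encodable.encode p) := hcoord hopen
  have hev2 : ∀ᶠ k in Filter.atTop, q (W k) (Encodable.encode p) = 0 := by
    filter_upwards [Filter.eventually_ge_atTop m] with k hk
    have hmem : pre b m ∈ cod (q (W k)) :=
      cod_tree (q (W k)) (pre_prefix b hk) (hW2 k)
    exact hmem p hp
  obtain ⟨k, h1, h2⟩ := (hev1.and hev2).exists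
  rw [← h1, h2]

def zp (w : ℕ → ℕ) (s : List ℕ) : List ℕ :=
  List.ofFn (fun i : Fin s.length => Nat.pair (w i) (s.get i))

@[simp] theorem zp_length (w : ℕ → ℕ) (s : List ℕ) : (zp w s).length = s.length := by
  simp [zp]

theorem zp_take {w : ℕ → ℕ} {s t : List ℕ} (h : s <+: t) :
    (zp w t).take s.length = zp w s := by
  apply List.ext_getElem
  · simp [h.length_le]
  · intro i h1 h2
    have his : i < s.length := by simpa using h2
    have hit : i < t.length := lt_of_lt_of_le his h.length_le
    obtain ⟨r, rfl⟩ := h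
    simp only [List.getElem_take, zp, List.getElem_ofFn]
    congr 1
    simp [List.get_eq_getElem, List.getElem_append_left his]

theorem zp_sp {w : ℕ → ℕ} {s t : List ℕ} (h : SP s t) : SP (zp w s) (zp w t) := by
  refine ⟨?_, by simpa using h.2⟩
  rw [← zp_take (w := w) h.1]
  exact List.take_prefix _ _

theorem Vt_emb (q : (ℕ → ℕ) → (ℕ → ℕ)) (w : ℕ → ℕ) : Leq (cod (q w)) (Vt q) := by
  refine ⟨zp w, fun s hs => ?_, fun s t hs ht hst => zp_sp hst⟩
  refine ⟨w, ?_, ?_⟩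
  · apply List.ext_getElem
    · simp
    · intro i h1 h2
      have his : i < s.length := by simpa using h1
      simp [pre, zp, List.map_ofFn, Function.comp, Nat.unpair_pair]
  · have : (zp w s).map (fun n => (Nat.unpair n).2) = s := by
      have := List.ofFn_get s
      simp only [zp, List.map_ofFn]
      calc List.ofFn ((fun n => (Nat.unpair n).2) ∘ fun i : Fin s.length =>
            Nat.pair (w i) (s.get i)) = List.ofFn (s.get) := by
              congr 1
              funext i
              simp [Function.comp, Nat.unpair_pair]
      _ = s := List.ofFn_get s
    rw [this]
    exact hs

def Tdot (V : Set (List ℕ)) : Set (List ℕ) := insert [] ((fun v => 0 :: v) '' V)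

theorem Tdot_tree {V : Set (List ℕ)} (hV : IsTree V) : IsTree (Tdot V) := by
  rintro p v hpv (rfl | ⟨v', hv', rfl⟩)
  · rw [List.prefix_nil.1 hpv]; exact Or.inl rfl
  · rcases p with _ | ⟨a, p'⟩
    · exact Or.inl rfl
    · obtain ⟨ha, hp'⟩ := (List.cons_prefix_cons).1 hpv
      subst ha
      exact Or.inr ⟨p', hV hp' hv', rfl⟩

theorem Tdot_wf {V : Set (List ℕ)} (hV : ¬ IllF V) : ¬ IllF (Tdot V) := by
  rintro ⟨c, hc⟩
  apply hV
  refine ⟨fun i => c (i + 1), fun k => ?_⟩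
  have h1 := hc (k + 1)
  rcases h1 with h1 | ⟨v', hv', h1⟩
  · have := congrArg List.length h1
    simp at this
  · have h2 : pre c (k + 1) = c 0 :: pre (fun i => c (i + 1)) k := by
      simp [pre, List.ofFn_succ]
    rw [h2] at h1
    injection h1 with ha hb
    rw [← hb]
    exact hv'

theorem Tdot_lt (V : Set (List ℕ)) : Lt V (Tdot V) := by
  refine ⟨Or.inl rfl, fun v => 0 :: v, ⟨fun v hv => Or.inr ⟨v, hv, rfl⟩, ?_⟩, ?_⟩
  · intro s t hs ht hst
    exact ⟨List.cons_prefix_cons.2 ⟨rfl, hst.1⟩, by simpa using hst.2⟩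
  · intro s hs
    simp

theorem illc_not_range (q : (ℕ → ℕ) → (ℕ → ℕ)) (hq : Continuous q)
    (hrange : range q = {t | IllF (cod t)}ᶜ) : False := by
  have hnill : ∀ w, ¬ IllF (cod (q w)) := by
    intro w h
    have hmem : q w ∈ range q := mem_range_self w
    rw [hrange] at hmem
    exact hmem h
  have hVtree := Vt_tree q
  have hVwf := Vt_wf hq hnill
  have hTdtree := Tdot_tree hVtree
  have hTdwf := Tdot_wf hVwf
  have hLt := Tdot_lt (Vt q)
  have hchi : cod (chi (Tdot (Vt q))) = Tdot (Vt q) := cod_chi hTdtree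
  have hmem : chi (Tdot (Vt q)) ∈ range q := by
    rw [hrange]
    intro hi
    have hi' : IllF (cod (chi (Tdot (Vt q)))) := hi
    rw [hchi] at hi'
    exact hTdwf hi'
  obtain ⟨w0, hw0⟩ := hmem
  have hemb : Leq (cod (q w0)) (Vt q) := Vt_emb q w0
  rw [hw0, hchi] at hemb
  exact not_lt_and_leq hVtree hTdtree hVwf hLt hemb

theorem exists_good_code (M : Set (ℕ → ℕ)) (hMc : MeasureTheory.AnalyticSet Mᶜ)
    (hIll : ∀ t, IllF (cod t) → t ∈ M) : ∃ t, ¬ IllF (cod t) ∧ t ∈ M := by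
  by_contra h
  push_neg at h
  have heq : Mᶜ = {t | IllF (cod t)}ᶜ := by
    ext t
    constructor
    · intro ht hi
      exact ht (hIll t hi)
    · intro ht
      exact h t ht
  rw [heq] at hMc
  rw [MeasureTheory.AnalyticSet] at hMc
  have hone : (fun _ => 1 : ℕ → ℕ) ∈ {t : ℕ → ℕ | IllF (cod t)}ᶜ := by
    rintro ⟨b, hb⟩
    have := hb 0 [] (by simp)
    simp at this
  rcases hMc with he | ⟨g, hg, hrange⟩
  · rw [he] at hone
    exact hone
  · exact illc_not_range g hg hrange

end FSep


theorem fubini_small_analytic_separated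
    {X Y : Type*} [TopologicalSpace X] [PolishSpace X] [TopologicalSpace Y] [PolishSpace Y]
    (I : Set (Set X)) (J : Set (Set Y))
    (hI : SigmaIdeal I) (hJ : SigmaIdeal J)
    (hIp : Pi11OnSigma11 I) (hJp : Pi11OnSigma11 J)
    (A : Set (X × Y)) (hA : MeasureTheory.AnalyticSet A) (hAmem : A ∈ FubiniProd I J) :
    ∃ D : Set (X × Y), MeasureTheory.AnalyticSet D ∧ A ∩ D = ∅ ∧
      {x : X | {y : Y | (x, y) ∉ D} ∉ J} ∈ I := by
  classical
  open FSep MeasureTheory in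
  rw [MeasureTheory.AnalyticSet] at hA
  rcases hA with rfl | ⟨f, hf, rfl⟩
  · -- degenerate case `A = ∅`
    refine ⟨univ, isClosed_univ.analyticSet, by simp, ?_⟩
    have he : {x : X | {y : Y | (x, y) ∉ (univ : Set (X × Y))} ∉ J} =
        {x : X | {y : Y | (x, y) ∈ (∅ : Set (X × Y))} ∉ J} := by
      simp
    rw [he]
    exact hAmem
  · -- main case: `A = range f`
    have hXYne : Nonempty (X × Y) := ⟨f (fun _ => 0)⟩
    have hXne : Nonempty X := ⟨hXYne.some.1⟩
    letI := TopologicalSpace.upgradeIsCompletelyMetrizable (X × Y)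
    set B : Set ((ℕ → ℕ) × (X × Y)) := {p | FSep.Lt (FSep.cod p.1) (FSep.Tr f p.2)} with hB
    have hBan : AnalyticSet B := FSep.analytic_ltSet f
    have hBillf : ∀ t : ℕ → ℕ, FSep.IllF (FSep.cod t) →
        {z : X × Y | (t, z) ∈ B} = range f := by
      intro t ht
      ext z
      simp only [mem_setOf_eq]
      constructor
      · intro h
        rw [← FSep.tr_illF hf z]
        exact FSep.lt_illF (FSep.tr_tree f z) h ht
      · intro hz
        exact FSep.illF_lt ((FSep.tr_illF hf z).2 hz)
    set M : Set (ℕ → ℕ) :=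
      {t | {x : X | {y : Y | (t, (x, y)) ∈ B} ∉ J} ∈ I} with hM
    have hMc : AnalyticSet Mᶜ := by
      obtain ⟨h, hhc, hhs⟩ := PolishSpace.exists_nat_nat_continuous_surjective ((ℕ → ℕ) × X)
      set L : Set ((ℕ → ℕ) × Y) := {u | ((h u.1).1, ((h u.1).2, u.2)) ∈ B} with hL
      have hLan : AnalyticSet L := by
        have hcont : Continuous (fun u : (ℕ → ℕ) × Y => ((h u.1).1, ((h u.1).2, u.2))) := by
          have h1 : Continuous fun u : (ℕ → ℕ) × Y => h u.1 := hhc.comp continuous_fst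
          exact (h1.fst).prodMk ((h1.snd).prodMk continuous_snd)
        exact FSep.analyticSet_preimage hBan hcont
      have hJ1 : AnalyticSet {u : ℕ → ℕ | {y : Y | (u, y) ∈ L} ∈ J}ᶜ := hJp L hLan
      set Q : Set ((ℕ → ℕ) × X) := {p | {y : Y | (p.1, (p.2, y)) ∈ B} ∉ J} with hQ
      have hQan : AnalyticSet Q := by
        have himg : Q = h '' {u : ℕ → ℕ | {y : Y | (u, y) ∈ L} ∈ J}ᶜ := by
          ext p
          constructor
          · intro hp
            obtain ⟨u, hu⟩ := hhs p
            refine ⟨u, ?_, hu⟩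
            show ¬ _
            have hsec : {y : Y | (u, y) ∈ L} = {y : Y | (p.1, (p.2, y)) ∈ B} := by
              ext y
              simp only [hL, mem_setOf_eq, hu]
            rw [mem_setOf_eq, hsec]
            exact hp
          · rintro ⟨u, hu, rfl⟩
            have hsec : {y : Y | (u, y) ∈ L} =
                {y : Y | ((h u).1, ((h u).2, y)) ∈ B} := rfl
            rw [mem_compl_iff, mem_setOf_eq, hsec] at hu
            exact hu
        rw [himg]
        exact hJ1.image_of_continuous hhc
      have hI1 := hIp Q hQan
      have hMeq : Mᶜ = {t : ℕ → ℕ | {x : X | (t, x) ∈ Q} ∈ I}ᶜ := rfl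
      rw [hMeq]
      exact hI1
    have hIll : ∀ t : ℕ → ℕ, FSep.IllF (FSep.cod t) → t ∈ M := by
      intro t ht
      show {x : X | {y : Y | (t, (x, y)) ∈ B} ∉ J} ∈ I
      have hsece : {x : X | {y : Y | (t, (x, y)) ∈ B} ∉ J} =
          {x : X | {y : Y | (x, y) ∈ range f} ∉ J} := by
        ext x
        have hsec : {y : Y | (t, (x, y)) ∈ B} = {y : Y | (x, y) ∈ range f} := by
          ext y
          exact (Set.ext_iff.1 (hBillf t ht)) (x, y)
        rw [mem_setOf_eq, mem_setOf_eq, hsec]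
      rw [hsece]
      exact hAmem
    obtain ⟨t0, ht0wf, ht0M⟩ := FSep.exists_good_code M hMc hIll
    set D : Set (X × Y) := {z | FSep.Leq (FSep.Tr f z) (FSep.cod t0)} with hD
    have hDan : AnalyticSet D := FSep.analytic_leqSet f (FSep.cod t0)
    have hdisj : range f ∩ D = ∅ := by
      ext z
      simp only [Set.mem_inter_iff, mem_empty_iff_false, iff_false]
      rintro ⟨hz1, hz2⟩
      exact ht0wf (FSep.leq_illF (FSep.cod_tree t0) hz2 ((FSep.tr_illF hf z).2 hz1))
    have hcompl : ∀ z : X × Y, z ∉ D ↔ (t0, z) ∈ B := by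
      intro z
      constructor
      · intro hz
        rcases FSep.total (FSep.cod_tree t0) (FSep.tr_tree f z) ht0wf with h | h
        · exact h
        · exact absurd h hz
      · intro hz hzD
        exact FSep.not_lt_and_leq (FSep.cod_tree t0) (FSep.tr_tree f z) ht0wf hz hzD
    refine ⟨D, hDan, hdisj, ?_⟩
    have hfin : {x : X | {y : Y | (x, y) ∉ D} ∉ J} =
        {x : X | {y : Y | (t0, (x, y)) ∈ B} ∉ J} := by
      ext x
      have hsec : {y : Y | (x, y) ∉ D} = {y : Y | (t0, (x, y)) ∈ B} := by
        ext y
        exact hcompl (x, y)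
      rw [mem_setOf_eq, mem_setOf_eq, hsec]
    rw [hfin]
    exact ht0M
end FSepAux
end

section
/- Let X and Y be Polish spaces and let f : Y → X be a continuous open surjection. Suppose B ⊆ Y has the Baire property and the set {x ∈ X : B ∩ f⁻¹({x}) is meager in the subspace f⁻¹({x})} is comeager in X. Then B is meager in Y. -/
open Set

/-- `B` has the Baire property: its symmetric difference with some open set is meager. -/
def HasBaireProperty {Y : Type*} [TopologicalSpace Y] (B : Set Y) : Prop :=
  ∃ U : Set Y, IsOpen U ∧ IsMeagre (symmDiff B U)

lemma isMeagre_biUnion' {X ι : Type*} [TopologicalSpace X] {S : Set ι} (hS : S.Countable)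
    {g : ι → Set X} (hg : ∀ i ∈ S, IsMeagre (g i)) : IsMeagre (⋃ i ∈ S, g i) := by
  rw [IsMeagre, compl_iUnion₂]
  exact (countable_bInter_mem hS).mpr hg

lemma IsNowhereDense.isMeagre' {α : Type*} [TopologicalSpace α] {s : Set α}
    (h : IsNowhereDense s) : IsMeagre s :=
  isMeagre_iff_countable_union_isNowhereDense.mpr
    ⟨{s}, by simpa, countable_singleton s, by simp⟩

lemma not_isMeagre_of_isOpen' {α : Type*} [TopologicalSpace α] [BaireSpace α] {O : Set α}
    (hO : IsOpen O) (hne : O.Nonempty) : ¬ IsMeagre O := by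
  intro hm
  have hd : Dense Oᶜ := dense_of_mem_residual hm
  obtain ⟨x, hxO, hxc⟩ := hd.inter_open_nonempty O hO hne
  exact hxc hxO

/-- If `W` is dense open in `Y` and `f` is a continuous open map, then for comeagerly many `x`,
`W ∩ f⁻¹(x)` is dense in the fiber. -/
lemma dense_fiber_comeager {X Y : Type*} [TopologicalSpace X] [TopologicalSpace Y]
    [SecondCountableTopology Y] (f : Y → X) (hf : Continuous f) (hopen : IsOpenMap f)
    {W : Set Y} (hWo : IsOpen W) (hWd : Dense W) :
    IsMeagre {x : X | ¬ Dense (Subtype.val ⁻¹' W : Set (f ⁻¹' {x}))} := by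
  obtain ⟨b, hbc, -, hb⟩ := TopologicalSpace.exists_countable_basis Y
  set g : Set Y → Set X := fun V => closure (f '' V) \ f '' (V ∩ W) with hg
  have hnd : ∀ V ∈ b, IsNowhereDense (g V) := by
    intro V hV
    have hVo : IsOpen V := hb.isOpen hV
    have hcl : IsClosed (g V) := isClosed_closure.sdiff (hopen _ (hVo.inter hWo))
    rw [hcl.isNowhereDense_iff, eq_empty_iff_forall_notMem]
    intro x hx
    have hOsub : interior (g V) ⊆ g V := interior_subset
    have hxc : x ∈ closure (f '' V) := (hOsub hx).1
    obtain ⟨x', hx'O, y, hyV, hyx⟩ := mem_closure_iff.mp hxc _ isOpen_interior hx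
    have hO' : IsOpen (V ∩ f ⁻¹' (interior (g V))) :=
      hVo.inter (isOpen_interior.preimage hf)
    obtain ⟨z, ⟨hzV, hzO⟩, hzW⟩ := hWd.inter_open_nonempty _ hO'
      ⟨y, hyV, by simpa [hyx] using hx'O⟩
    exact (hOsub hzO).2 ⟨z, ⟨hzV, hzW⟩, rfl⟩
  have hT : IsMeagre (⋃ V ∈ b, g V) :=
    isMeagre_biUnion' hbc fun V hV => (hnd V hV).isMeagre'
  refine hT.mono ?_
  intro x hx
  simp only [mem_setOf_eq] at hx
  rw [dense_iff_inter_open] at hx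
  push_neg at hx
  obtain ⟨U, hUo, hUne, hUdisj⟩ := hx
  obtain ⟨O, hOo, rfl⟩ := isOpen_induced_iff.mp hUo
  obtain ⟨⟨y, hyF⟩, hyO⟩ := hUne
  obtain ⟨V, hVb, hyV, hVO⟩ := hb.exists_subset_of_mem_open hyO hOo
  have hxgV : x ∈ g V := by
    constructor
    · exact subset_closure ⟨y, hyV, hyF⟩
    · rintro ⟨z, ⟨hzV, hzW⟩, hzx⟩
      have hzF : z ∈ f ⁻¹' ({x} : Set X) := by simp [hzx]
      have : (⟨z, hzF⟩ : f ⁻¹' {x}) ∈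
          (Subtype.val ⁻¹' O ∩ Subtype.val ⁻¹' W : Set (f ⁻¹' {x})) :=
        ⟨hVO hzV, hzW⟩
      rw [hUdisj] at this
      exact this
  exact mem_biUnion hVb hxgV

/-- If `M` is meager in `Y` and `f` is a continuous open map, then for comeagerly many `x`,
`M ∩ f⁻¹(x)` is meager in the fiber. -/
lemma meager_fiber_comeager {X Y : Type*} [TopologicalSpace X] [TopologicalSpace Y]
    [SecondCountableTopology Y] (f : Y → X) (hf : Continuous f) (hopen : IsOpenMap f)
    {M : Set Y} (hM : IsMeagre M) :
    IsMeagre {x : X | ¬ IsMeagre (Subtype.val ⁻¹' M : Set (f ⁻¹' {x}))} := by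
  obtain ⟨T, hTo, hTd, hTc, hts⟩ := mem_residual_iff.mp hM
  have key : IsMeagre (⋃ W ∈ T, {x : X | ¬ Dense (Subtype.val ⁻¹' W : Set (f ⁻¹' {x}))}) :=
    isMeagre_biUnion' hTc fun W hW =>
      dense_fiber_comeager f hf hopen (hTo W hW) (hTd W hW)
  refine key.mono ?_
  intro x hx
  simp only [mem_setOf_eq] at hx
  by_contra hmem
  simp only [mem_iUnion, mem_setOf_eq, not_exists, not_and, not_not] at hmem
  apply hx
  have hMsub : M ⊆ ⋃ W ∈ T, Wᶜ := by
    intro y hy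
    by_contra hy'
    simp only [mem_iUnion, mem_compl_iff, not_exists, not_and, not_not] at hy'
    exact (hts (by simpa [mem_sInter] using hy' : y ∈ ⋂₀ T)) hy
  have : (Subtype.val ⁻¹' M : Set (f ⁻¹' {x})) ⊆
      ⋃ W ∈ T, (Subtype.val ⁻¹' W : Set (f ⁻¹' {x}))ᶜ := by
    intro z hz
    have := hMsub hz
    simp only [mem_iUnion, mem_compl_iff] at this ⊢
    exact this
  refine (isMeagre_biUnion' hTc ?_).mono this
  intro W hW
  have hnd : IsNowhereDense ((Subtype.val ⁻¹' W : Set (f ⁻¹' {x}))ᶜ) :=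
    (isClosed_isNowhereDense_iff_compl.mpr (by
      rw [compl_compl]
      exact ⟨(hTo W hW).preimage continuous_subtype_val, hmem W hW⟩)).2
  exact hnd.isMeagre'

theorem kuratowski_ulam_for_open_maps
    {X Y : Type*} [TopologicalSpace X] [PolishSpace X]
    [TopologicalSpace Y] [PolishSpace Y]
    (f : Y → X) (hf : Continuous f) (hopen : IsOpenMap f) (hsurj : Function.Surjective f)
    (B : Set Y) (hB : HasBaireProperty B)
    (h : IsMeagre {x : X | ¬ IsMeagre (Subtype.val ⁻¹' B : Set (f ⁻¹' {x}))}) :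
    IsMeagre B := by
  obtain ⟨U, hUopen, hMmeag⟩ := hB
  set M := symmDiff B U with hMdef
  have hBsub : B ⊆ U ∪ M := by
    intro y hy
    by_cases hyU : y ∈ U
    · exact Or.inl hyU
    · exact Or.inr (Or.inl ⟨hy, hyU⟩)
  have hUsub : U ⊆ B ∪ M := by
    intro y hy
    by_cases hyB : y ∈ B
    · exact Or.inl hyB
    · exact Or.inr (Or.inr ⟨hy, hyB⟩)
  -- the bad set for M
  have hbadM : IsMeagre {x : X | ¬ IsMeagre (Subtype.val ⁻¹' M : Set (f ⁻¹' {x}))} :=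
    meager_fiber_comeager f hf hopen hMmeag
  -- f '' U is contained in the union of the two bad sets
  have himg : f '' U ⊆ {x : X | ¬ IsMeagre (Subtype.val ⁻¹' B : Set (f ⁻¹' {x}))} ∪
      {x : X | ¬ IsMeagre (Subtype.val ⁻¹' M : Set (f ⁻¹' {x}))} := by
    rintro x ⟨y, hyU, rfl⟩
    by_contra hx
    simp only [mem_union, mem_setOf_eq, not_or, not_not] at hx
    obtain ⟨hxB, hxM⟩ := hx
    -- the fiber is a Polish space, hence a Baire space
    have hFcl : IsClosed (f ⁻¹' {f y}) := (isClosed_singleton).preimage hf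
    haveI : PolishSpace (f ⁻¹' {f y}) := hFcl.polishSpace
    letI := TopologicalSpace.upgradeIsCompletelyMetrizable (f ⁻¹' {f y})
    have hyF : y ∈ f ⁻¹' ({f y} : Set X) := rfl
    have hOne : (Subtype.val ⁻¹' U : Set (f ⁻¹' {f y})).Nonempty := ⟨⟨y, hyF⟩, hyU⟩
    have hOopen : IsOpen (Subtype.val ⁻¹' U : Set (f ⁻¹' {f y})) :=
      hUopen.preimage continuous_subtype_val
    have hOsub : (Subtype.val ⁻¹' U : Set (f ⁻¹' {f y})) ⊆
        (Subtype.val ⁻¹' B) ∪ (Subtype.val ⁻¹' M) := fun z hz => hUsub hz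
    have hmeag : IsMeagre ((Subtype.val ⁻¹' B : Set (f ⁻¹' {f y})) ∪ Subtype.val ⁻¹' M) := by
      rw [IsMeagre, compl_union]
      exact Filter.inter_mem hxB hxM
    exact not_isMeagre_of_isOpen hOopen hOne (hmeag.mono hOsub)
  have hfU : IsMeagre (f '' U) := by
    refine IsMeagre.mono himg ?_
    rw [IsMeagre, compl_union]
    exact Filter.inter_mem h hbadM
  have hUempty : U = ∅ := by
    letI := TopologicalSpace.upgradeIsCompletelyMetrizable X
    by_contra hne
    obtain ⟨y, hy⟩ := nonempty_iff_ne_empty.mpr hne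
    exact not_isMeagre_of_isOpen (hopen U hUopen) ⟨f y, y, hy, rfl⟩ hfU
  have hUmeag : IsMeagre U := by rw [hUempty]; exact IsMeagre.empty
  refine IsMeagre.mono hBsub ?_
  rw [IsMeagre, compl_union]
  exact Filter.inter_mem hUmeag hMmeag
end

section
/- Let X and Y be Polish spaces and let f : Y → X be a continuous open surjection. If U ⊆ Y is open and dense, then the set {x ∈ X : U ∩ f⁻¹({x}) is dense in the subspace f⁻¹({x})} is comeager in X. -/
open Set

theorem dense_open_fiberwise_dense_comeager
    {X Y : Type*} [TopologicalSpace X] [PolishSpace X]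
    [TopologicalSpace Y] [PolishSpace Y]
    (f : Y → X) (hf : Continuous f) (hopen : IsOpenMap f) (hsurj : Function.Surjective f)
    (U : Set Y) (hU : IsOpen U) (hdense : Dense U) :
    IsMeagre {x : X | ¬ Dense (Subtype.val ⁻¹' U : Set (f ⁻¹' {x}))} := by
  obtain ⟨B, hBc, -, hB⟩ := TopologicalSpace.exists_countable_basis Y
  rw [isMeagre_iff_countable_union_isNowhereDense]
  refine ⟨(fun V => f '' V \ f '' (V ∩ U)) '' B, ?_, hBc.image _, ?_⟩
  · rintro t ⟨V, hV, rfl⟩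
    have hVo : IsOpen V := hB.isOpen hV
    have hcl : f '' V ⊆ closure (f '' (V ∩ U)) := by
      have h1 : V ⊆ closure (V ∩ U) := hdense.open_subset_closure_inter hVo
      calc f '' V ⊆ f '' closure (V ∩ U) := image_mono h1
        _ ⊆ closure (f '' (V ∩ U)) := image_closure_subset_closure_image hf
    have hsub : f '' V \ f '' (V ∩ U) ⊆ frontier (f '' (V ∩ U)) := by
      intro x hx
      have ho : IsOpen (f '' (V ∩ U)) := hopen _ (hVo.inter hU)
      rw [frontier, ho.interior_eq]
      exact ⟨hcl hx.1, hx.2⟩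
    have hfr : interior (frontier (f '' (V ∩ U))) = ∅ := by
      rw [← frontier_compl]
      exact interior_frontier (isClosed_compl_iff.mpr (hopen _ (hVo.inter hU)))
    have hcls : closure (f '' V \ f '' (V ∩ U)) ⊆ frontier (f '' (V ∩ U)) := by
      rw [← isClosed_frontier.closure_eq]
      exact closure_mono hsub
    exact eq_empty_of_subset_empty (hfr ▸ interior_mono hcls)
  · intro x hx
    simp only [mem_setOf_eq] at hx
    rw [sUnion_image]
    by_contra hmem
    simp only [mem_iUnion, not_exists] at hmem
    apply hx
    rw [dense_iff_inter_open]
    rintro W hW ⟨⟨y, hyx⟩, hyW⟩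
    obtain ⟨O, hO, rfl⟩ := isOpen_induced_iff.mp hW
    obtain ⟨V, hVB, hyV, hVO⟩ := hB.exists_subset_of_mem_open (show y ∈ O from hyW) hO
    have hxV : x ∈ f '' V := ⟨y, hyV, hyx⟩
    have := hmem V hVB
    have hxVU : x ∈ f '' (V ∩ U) := by
      by_contra h
      exact this ⟨hxV, h⟩
    obtain ⟨z, ⟨hzV, hzU⟩, hzx⟩ := hxVU
    exact ⟨⟨z, hzx⟩, hVO hzV, hzU⟩
end

section
/- For any set A ⊆ 2^ω the following are equivalent: (a) A ∈ E; (b) there exists a function C assigning to each finite binary string σ of length n ≥ 1 a clopen set C(σ) ⊆ [σ] with μ(C(σ)) < 2^{-n}/n, such that for every x ∈ A there are at most finitely many n with x ∉ C(x↾n). (Condition (b) expresses that Eve has a winning strategy in the fusion game G_E(A).) -/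
open Set

/-- The basic clopen set `[σ]` of all infinite binary sequences extending the finite
binary string `σ`. -/
def cylinder (σ : List Bool) : Set (ℕ → Bool) :=
  {x | ∀ i : Fin σ.length, x i = σ.get i}


open MeasureTheory Filter Topology


/-- the finite cylinder determined by a function `Fin m → Bool` -/
def piece (m : ℕ) (v : Fin m → Bool) : Set (ℕ → Bool) :=
  {x | ∀ i : Fin m, x i = v i}

lemma isClopen_piece (m : ℕ) (v : Fin m → Bool) : IsClopen (piece m v) := by
  have h : piece m v = ⋂ i : Fin m, (fun x : ℕ → Bool => x i) ⁻¹' {v i} := by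
    ext x; simp [piece]
  rw [h]
  exact isClopen_iInter_of_finite fun i =>
    (isClopen_discrete _).preimage (continuous_apply _)

lemma measurableSet_piece (m : ℕ) (v : Fin m → Bool) : MeasurableSet (piece m v) := by
  have h : piece m v = ⋂ i : Fin m, (fun x : ℕ → Bool => x i) ⁻¹' {v i} := by
    ext x; simp [piece]
  rw [h]
  exact MeasurableSet.iInter fun i => measurable_pi_apply (i : ℕ) (measurableSet_singleton _)

/-- clopen approximation of a set from level-`m` cylinders -/
def kap (F : Set (ℕ → Bool)) (m : ℕ) : Set (ℕ → Bool) :=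
  {x | ∃ y ∈ F, ∀ i < m, x i = y i}

lemma kap_eq (F : Set (ℕ → Bool)) (m : ℕ) :
    kap F m = ⋃ v ∈ {v : Fin m → Bool | (piece m v ∩ F).Nonempty}, piece m v := by
  ext x
  constructor
  · rintro ⟨y, hy, ha⟩
    refine mem_biUnion (show (fun i : Fin m => x i) ∈ _ from ⟨y, fun i => (ha i i.2).symm, hy⟩) ?_
    exact fun i => rfl
  · rintro hx
    rcases mem_iUnion₂.1 hx with ⟨v, ⟨y, hyv, hyF⟩, hxv⟩
    exact ⟨y, hyF, fun i hi => (hxv ⟨i, hi⟩).trans (hyv ⟨i, hi⟩).symm⟩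

lemma isClopen_kap (F : Set (ℕ → Bool)) (m : ℕ) : IsClopen (kap F m) := by
  rw [kap_eq]
  exact (Set.toFinite _).isClopen_biUnion fun v _ => isClopen_piece m v

lemma measurableSet_kap (F : Set (ℕ → Bool)) (m : ℕ) : MeasurableSet (kap F m) := by
  rw [kap_eq]
  exact MeasurableSet.biUnion (Set.to_countable _) fun v _ => measurableSet_piece m v

lemma antitone_kap (F : Set (ℕ → Bool)) : Antitone (kap F) :=
  fun m₁ m₂ h x => fun ⟨y, hy, ha⟩ => ⟨y, hy, fun i hi => ha i (lt_of_lt_of_le hi h)⟩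

lemma subset_kap (F : Set (ℕ → Bool)) (m : ℕ) : F ⊆ kap F m :=
  fun x hx => ⟨x, hx, fun _ _ => rfl⟩

lemma iInter_kap (F : Set (ℕ → Bool)) (hF : IsClosed F) : ⋂ m, kap F m = F := by
  refine subset_antisymm ?_ (subset_iInter fun m => subset_kap F m)
  intro x hx
  simp only [mem_iInter] at hx
  choose y hyF ha using hx
  have hy : Tendsto y atTop (𝓝 x) := by
    rw [tendsto_pi_nhds]
    intro i
    refine tendsto_const_nhds.congr' ?_
    filter_upwards [eventually_ge_atTop (i + 1)] with m hm
    exact ha m i (Nat.lt_of_succ_le hm)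
  exact hF.mem_of_tendsto hy (Eventually.of_forall hyF)

lemma exists_kap_lt (μ : Measure (ℕ → Bool)) (hfin : μ univ ≠ ⊤)
    (F : Set (ℕ → Bool)) (hF : IsClosed F) (hF0 : μ F = 0)
    (δ : ENNReal) (hδ : 0 < δ) : ∃ m, μ (kap F m) < δ := by
  have ht := tendsto_measure_iInter_atTop (μ := μ)
    (fun m => (measurableSet_kap F m).nullMeasurableSet) (antitone_kap F)
    ⟨0, ne_top_of_le_ne_top hfin (measure_mono (subset_univ _))⟩
  rw [iInter_kap F hF, hF0] at ht
  exact (ht.eventually_lt_const hδ).exists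

lemma isClopen_cylinder (σ : List Bool) : IsClopen (cylinder σ) := by
  have h : cylinder σ = ⋂ i : Fin σ.length, (fun x : ℕ → Bool => x i) ⁻¹' {σ.get i} := by
    ext x; simp [_root_.cylinder]
  rw [h]
  exact isClopen_iInter_of_finite fun i =>
    (isClopen_discrete _).preimage (continuous_apply _)

lemma mem_cylinder_ofFn (x : ℕ → Bool) (n : ℕ) :
    x ∈ cylinder (List.ofFn fun i : Fin n => x i) := by
  intro i
  simp [List.get_ofFn]

lemma cylinder_nil : cylinder ([] : List Bool) = univ := by
  ext x; simp only [_root_.cylinder, mem_setOf_eq, mem_univ, iff_true]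
  exact fun i => i.elim0

lemma tsum_half_pow : ∑' k : ℕ, (2⁻¹ : ENNReal) ^ (k + 2) = 2⁻¹ := by
  rw [tsum_congr (fun k => pow_add (2⁻¹ : ENNReal) k 2), ENNReal.tsum_mul_right,
    ENNReal.tsum_geometric, ENNReal.one_sub_inv_two, inv_inv]
  rw [pow_two, ← mul_assoc, ENNReal.mul_inv_cancel two_ne_zero ENNReal.ofNat_ne_top, one_mul]

/-- Characterization of the σ-ideal `E` generated by closed null sets in the Cantor
space via Eve's winning strategies in the fusion game `G_E(A)`.  Here `μ` is the
fair-coin product measure on `2^ω`, characterized by its values on basic clopen sets. -/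
theorem mem_closed_null_ideal_iff_strategy
    (μ : MeasureTheory.Measure (ℕ → Bool))
    (hμ : ∀ σ : List Bool, μ (cylinder σ) = (2 : ENNReal)⁻¹ ^ σ.length)
    (A : Set (ℕ → Bool)) :
    (∃ f : ℕ → Set (ℕ → Bool), (∀ n, IsClosed (f n) ∧ μ (f n) = 0) ∧ A ⊆ ⋃ n, f n) ↔
      ∃ C : List Bool → Set (ℕ → Bool),
        (∀ σ : List Bool, 1 ≤ σ.length →
          IsClopen (C σ) ∧ C σ ⊆ cylinder σ ∧
            μ (C σ) < (2 : ENNReal)⁻¹ ^ σ.length / (σ.length : ENNReal)) ∧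
        ∀ x ∈ A, {n : ℕ | 0 < n ∧ x ∉ C (List.ofFn fun i : Fin n => x i)}.Finite := by
  have hfin : μ univ ≠ ⊤ := by
    rw [← cylinder_nil, hμ]
    simp
  constructor
  · rintro ⟨f, hf, hA⟩
    set δ : ℕ → ℕ → ENNReal :=
      fun n k => ((2 : ENNReal)⁻¹ ^ n / (n : ENNReal)) * (2 : ENNReal)⁻¹ ^ (k + 2) with hδ
    have hhalf0 : (2 : ENNReal)⁻¹ ≠ 0 := ENNReal.inv_ne_zero.2 ENNReal.ofNat_ne_top
    have hδpos : ∀ n k, 0 < δ n k := by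
      intro n k
      refine ENNReal.mul_pos ?_ (pow_ne_zero _ hhalf0)
      exact (ENNReal.div_pos (pow_ne_zero _ hhalf0) (ENNReal.natCast_ne_top n)).ne'
    choose m hm using fun n k =>
      exists_kap_lt μ hfin (f k) (hf k).1 (hf k).2 (δ n k) (hδpos n k)
    refine ⟨fun σ => cylinder σ ∩
      ⋃ k ∈ Finset.range (σ.length + 1), kap (f k) (m σ.length k), fun σ hσ => ⟨?_, inter_subset_left, ?_⟩, ?_⟩
    · exact (isClopen_cylinder σ).inter
        (isClopen_biUnion_finset fun k _ => isClopen_kap _ _)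
    · have hc0 : (2 : ENNReal)⁻¹ ^ σ.length / (σ.length : ENNReal) ≠ 0 := by
        exact (ENNReal.div_pos (pow_ne_zero _ hhalf0) (ENNReal.natCast_ne_top _)).ne'
      have hctop : (2 : ENNReal)⁻¹ ^ σ.length / (σ.length : ENNReal) ≠ ⊤ := by
        refine (ENNReal.div_lt_top (by simp [ENNReal.inv_ne_top]) ?_).ne
        exact_mod_cast Nat.one_le_iff_ne_zero.1 hσ
      calc μ (cylinder σ ∩ ⋃ k ∈ Finset.range (σ.length + 1), kap (f k) (m σ.length k))
          ≤ μ (⋃ k ∈ Finset.range (σ.length + 1), kap (f k) (m σ.length k)) :=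
            measure_mono inter_subset_right
        _ ≤ ∑ k ∈ Finset.range (σ.length + 1), μ (kap (f k) (m σ.length k)) :=
            measure_biUnion_finset_le _ _
        _ ≤ ∑ k ∈ Finset.range (σ.length + 1), δ σ.length k :=
            Finset.sum_le_sum fun k _ => (hm σ.length k).le
        _ = ((2 : ENNReal)⁻¹ ^ σ.length / (σ.length : ENNReal)) *
              ∑ k ∈ Finset.range (σ.length + 1), (2 : ENNReal)⁻¹ ^ (k + 2) := by
            rw [hδ, Finset.mul_sum]
        _ ≤ ((2 : ENNReal)⁻¹ ^ σ.length / (σ.length : ENNReal)) *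
              ∑' k : ℕ, (2 : ENNReal)⁻¹ ^ (k + 2) :=
            mul_le_mul_right (ENNReal.sum_le_tsum _) _
        _ = ((2 : ENNReal)⁻¹ ^ σ.length / (σ.length : ENNReal)) * 2⁻¹ := by
            rw [tsum_half_pow]
        _ < (2 : ENNReal)⁻¹ ^ σ.length / (σ.length : ENNReal) := by
            nth_rewrite 2 [← mul_one ((2 : ENNReal)⁻¹ ^ σ.length / (σ.length : ENNReal))]
            exact ENNReal.mul_lt_mul_right hc0 hctop (by
              rw [ENNReal.inv_lt_one]; exact ENNReal.one_lt_two)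
    · intro x hx
      rcases mem_iUnion.1 (hA hx) with ⟨k, hk⟩
      refine (finite_Iio k).subset ?_
      intro n hn
      by_contra hkn
      have hkn' : k ≤ n := not_lt.1 fun h => hkn h
      refine hn.2 ⟨mem_cylinder_ofFn x n, ?_⟩
      refine mem_biUnion (Finset.mem_range.2 ?_) (subset_kap (f k) _ hk)
      simp only [List.length_ofFn]
      omega
  · rintro ⟨C, hC, hcap⟩
    have hClen : ∀ n : ℕ, 1 ≤ n → ∀ v : Fin n → Bool,
        IsClosed (C (List.ofFn v)) ∧ μ (C (List.ofFn v)) < (2 : ENNReal)⁻¹ ^ n / (n : ENNReal) := by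
      intro n hn v
      have h := hC (List.ofFn v) (by simpa using hn)
      refine ⟨h.1.isClosed, ?_⟩
      have := h.2.2
      rwa [List.length_ofFn] at this
    set D : ℕ → Set (ℕ → Bool) := fun n => ⋃ v : Fin n → Bool, C (List.ofFn v) with hD
    have hDmeas : ∀ n : ℕ, 1 ≤ n → μ (D n) ≤ ((n : ℕ) : ENNReal)⁻¹ := by
      intro n hn
      calc μ (D n) ≤ ∑' v : Fin n → Bool, μ (C (List.ofFn v)) := measure_iUnion_le _
        _ = ∑ v : Fin n → Bool, μ (C (List.ofFn v)) := tsum_fintype _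
        _ ≤ ∑ _v : Fin n → Bool, (2 : ENNReal)⁻¹ ^ n / (n : ENNReal) :=
            Finset.sum_le_sum fun v _ => ((hClen n hn v).2).le
        _ = (Fintype.card (Fin n → Bool) : ℕ) • ((2 : ENNReal)⁻¹ ^ n / (n : ENNReal)) := by
            rw [Finset.sum_const, Finset.card_univ]
        _ = ((n : ℕ) : ENNReal)⁻¹ := by
            rw [nsmul_eq_mul, Fintype.card_fun, Fintype.card_bool, Fintype.card_fin]
            rw [div_eq_mul_inv, ← mul_assoc]
            push_cast
            rw [← mul_pow, ENNReal.mul_inv_cancel two_ne_zero ENNReal.ofNat_ne_top, one_pow, one_mul]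
    refine ⟨fun M => ⋂ n, ⋂ (_ : M ≤ n ∧ 1 ≤ n), D n, fun M => ⟨?_, ?_⟩, ?_⟩
    · exact isClosed_iInter fun n => isClosed_iInter fun h =>
        isClosed_iUnion_of_finite fun v => (hClen n h.2 v).1
    · have hle : ∀ n : ℕ, 1 ≤ n → μ (⋂ n, ⋂ (_ : M ≤ n ∧ 1 ≤ n), D n) ≤ ((n : ℕ) : ENNReal)⁻¹ := by
        intro n hn
        have h1 : (⋂ n, ⋂ (_ : M ≤ n ∧ 1 ≤ n), D n) ⊆ D (max M n) := by
          refine iInter_subset_of_subset (max M n) ?_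
          exact iInter_subset _ ⟨le_max_left _ _, le_trans hn (le_max_right _ _)⟩
        refine le_trans (measure_mono h1) (le_trans (hDmeas _ (le_trans hn (le_max_right _ _))) ?_)
        exact ENNReal.inv_le_inv' (by exact_mod_cast le_max_right M n)
      by_contra h0
      rcases ENNReal.exists_inv_nat_lt h0 with ⟨n, hn⟩
      have hn1 : 1 ≤ n := by
        rcases Nat.eq_zero_or_pos n with h | h
        · subst h
          rw [Nat.cast_zero, ENNReal.inv_zero] at hn
          exact absurd hn not_top_lt
        · exact h
      exact absurd (hle n hn1) (not_le.2 hn)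
    · intro x hx
      obtain ⟨M, hM⟩ := (hcap x hx).bddAbove
      refine mem_iUnion.2 ⟨M + 1, ?_⟩
      refine mem_iInter.2 fun n => mem_iInter.2 fun hcond => ?_
      have hxC : x ∈ C (List.ofFn fun i : Fin n => x i) := by
        by_contra hxc
        have : n ∈ {n : ℕ | 0 < n ∧ x ∉ C (List.ofFn fun i : Fin n => x i)} := ⟨hcond.2, hxc⟩
        exact absurd (hM this) (by omega)
      exact mem_iUnion.2 ⟨fun i => x i, hxC⟩
end

section
/- Let X be a Polish space, let f : X → ω^ω be a function of Baire class 1 (the preimage under f of every open set is Fσ), and let G ⊆ X be any set. If F ⊆ X is closed and F ∩ G ∉ I^f, then there exist a point x ∈ F and a clopen set U ⊆ ω^ω with f(x) ∈ U such that for every open neighborhood V of x, (V \ f⁻¹[U]) ∩ G ∉ I^f. -/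
open Set

/-- `f` is of Baire class 1: the preimage of every open set is `Fσ`. -/
def BaireClassOne {X : Type*} [TopologicalSpace X] (f : X → (ℕ → ℕ)) : Prop :=
  ∀ U : Set (ℕ → ℕ), IsOpen U →
    ∃ F : ℕ → Set X, (∀ n, IsClosed (F n)) ∧ f ⁻¹' U = ⋃ n, F n

/-- The σ-ideal `I^f` generated by the closed sets on which `f` is continuous:
`A ∈ I^f` iff `A` is covered by countably many closed sets on which `f` restricts
to a continuous function. -/
def contIdeal {X : Type*} [TopologicalSpace X] (f : X → (ℕ → ℕ)) : Set (Set X) :=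
  {A | ∃ C : ℕ → Set X, (∀ n, IsClosed (C n) ∧ ContinuousOn f (C n)) ∧ A ⊆ ⋃ n, C n}

section Aux

variable {X : Type*} [TopologicalSpace X] (f : X → (ℕ → ℕ))

lemma contIdeal_mono {A B : Set X} (h : A ⊆ B) (hB : B ∈ contIdeal f) :
    A ∈ contIdeal f := by
  obtain ⟨C, hC, hBC⟩ := hB
  exact ⟨C, hC, h.trans hBC⟩

lemma contIdeal_iUnion {ι : Type*} [Countable ι] (A : ι → Set X)
    (h : ∀ i, A i ∈ contIdeal f) : (⋃ i, A i) ∈ contIdeal f := by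
  cases isEmpty_or_nonempty ι with
  | inl hι =>
    exact ⟨fun _ => ∅, fun n => ⟨isClosed_empty, continuousOn_empty f⟩, by simp⟩
  | inr hι =>
    choose C hC hAC using h
    obtain ⟨e, he⟩ := exists_surjective_nat (ι × ℕ)
    refine ⟨fun n => C (e n).1 (e n).2, fun n => hC _ _, ?_⟩
    intro x hx
    obtain ⟨i, hi⟩ := mem_iUnion.1 hx
    obtain ⟨n, hn⟩ := mem_iUnion.1 (hAC i hi)
    obtain ⟨m, hm⟩ := he (i, n)
    exact mem_iUnion.2 ⟨m, by rw [hm]; exact hn⟩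

lemma contIdeal_union {A B : Set X} (hA : A ∈ contIdeal f) (hB : B ∈ contIdeal f) :
    A ∪ B ∈ contIdeal f := by
  rw [union_eq_iUnion]
  exact contIdeal_iUnion f _ (fun b => by cases b <;> simpa)

/-- The union of all open sets `V` with `V ∩ A ∈ I^f`. -/
def wOp (A : Set X) : Set X := ⋃₀ {V | IsOpen V ∧ V ∩ A ∈ contIdeal f}

lemma isOpen_wOp (A : Set X) : IsOpen (wOp f A) :=
  isOpen_sUnion fun _ hV => hV.1

lemma mem_wOp_of {A V : Set X} {x : X} (hV : IsOpen V) (hx : x ∈ V)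
    (hVA : V ∩ A ∈ contIdeal f) : x ∈ wOp f A :=
  mem_sUnion.2 ⟨V, ⟨hV, hVA⟩, hx⟩

lemma wOp_inter_mem [SecondCountableTopology X] (A : Set X) :
    wOp f A ∩ A ∈ contIdeal f := by
  classical
  set S : Set (Set X) :=
    {b | b ∈ TopologicalSpace.countableBasis X ∧ b ∩ A ∈ contIdeal f} with hS
  have hScnt : S.Countable :=
    (TopologicalSpace.countable_countableBasis X).mono fun b hb => hb.1
  have := hScnt.to_subtype
  have hsub : wOp f A ∩ A ⊆ ⋃ b : S, ((b : Set X) ∩ A) := by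
    rintro x ⟨hx, hxA⟩
    obtain ⟨V, ⟨hVopen, hVA⟩, hxV⟩ := mem_sUnion.1 hx
    obtain ⟨b, hb, hxb, hbV⟩ :=
      (TopologicalSpace.isBasis_countableBasis X).exists_subset_of_mem_open hxV hVopen
    exact mem_iUnion.2
      ⟨⟨b, hb, contIdeal_mono f (inter_subset_inter_left A hbV) hVA⟩, hxb, hxA⟩
  exact contIdeal_mono f hsub (contIdeal_iUnion f _ fun b => b.2.2)

end Aux

/-- The cylinder determined by a finite sequence. -/
def cylS (ℓ : ℕ) (g : Fin ℓ → ℕ) : Set (ℕ → ℕ) := {τ | ∀ i : Fin ℓ, τ i = g i}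

lemma isClopen_cylS (ℓ : ℕ) (g : Fin ℓ → ℕ) : IsClopen (cylS ℓ g) := by
  have h : cylS ℓ g = ⋂ i : Fin ℓ, (fun τ : ℕ → ℕ => τ i) ⁻¹' {g i} := by
    ext τ; simp [cylS]
  rw [h]
  constructor
  · exact isClosed_iInter fun i => (isClosed_singleton).preimage (continuous_apply (i : ℕ))
  · exact isOpen_iInter_of_finite fun i =>
      (isOpen_discrete {g i}).preimage (continuous_apply (i : ℕ))

lemma cylS_mem_nhds {τ : ℕ → ℕ} {S : Set (ℕ → ℕ)} (hS : S ∈ nhds τ) :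
    ∃ ℓ : ℕ, cylS ℓ (fun i => τ i) ⊆ S := by
  classical
  obtain ⟨O, hOS, hOopen, hτO⟩ := mem_nhds_iff.1 hS
  obtain ⟨I, u, hu, hIu⟩ := isOpen_pi_iff.1 hOopen τ hτO
  refine ⟨(I.sup id) + 1, fun σ hσ => hOS (hIu ?_)⟩
  intro a ha
  have haI : a ∈ I := ha
  have hlt : a < (I.sup id) + 1 := Nat.lt_succ_of_le (Finset.le_sup (f := id) haI)
  have : σ a = τ a := hσ ⟨a, hlt⟩
  rw [this]
  exact (hu a haI).2

theorem exists_point_clopen_positive_off_preimage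
    {X : Type*} [TopologicalSpace X] [PolishSpace X]
    (f : X → (ℕ → ℕ)) (hf : BaireClassOne f) (G : Set X)
    (F : Set X) (hF : IsClosed F) (hFG : F ∩ G ∉ contIdeal f) :
    ∃ x ∈ F, ∃ U : Set (ℕ → ℕ), IsClopen U ∧ f x ∈ U ∧
      ∀ V : Set X, IsOpen V → x ∈ V → (V \ f ⁻¹' U) ∩ G ∉ contIdeal f := by
  classical
  by_contra hcon
  push_neg at hcon
  -- hcon : ∀ x ∈ F, ∀ U, IsClopen U → f x ∈ U →
  --          ∃ V, IsOpen V ∧ x ∈ V ∧ (V \ f ⁻¹' U) ∩ G ∈ contIdeal f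
  set W1 : ∀ ℓ : ℕ, (Fin ℓ → ℕ) → Set X :=
    fun ℓ g => wOp f (G \ f ⁻¹' cylS ℓ g) with hW1def
  set W2 : ∀ ℓ : ℕ, (Fin ℓ → ℕ) → Set X :=
    fun ℓ g => wOp f (G ∩ f ⁻¹' cylS ℓ g) with hW2def
  set P : ∀ ℓ : ℕ, (Fin ℓ → ℕ) → Set X :=
    fun ℓ g => F ∩ (W2 ℓ g)ᶜ with hPdef
  set D : ∀ ℓ : ℕ, (Fin ℓ → ℕ) → Set X :=
    fun ℓ g => P ℓ g \ ⋃ g' ∈ {g' | g' ≠ g}, W1 ℓ g' with hDdef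
  set T : Set X := ⋂ ℓ, ⋃ g, D ℓ g with hTdef
  set N : Set X :=
    (⋃ ℓ, ⋃ g : Fin ℓ → ℕ, W1 ℓ g ∩ (G \ f ⁻¹' cylS ℓ g)) ∪
      (⋃ ℓ, ⋃ g : Fin ℓ → ℕ, W2 ℓ g ∩ (G ∩ f ⁻¹' cylS ℓ g)) with hNdef
  -- consequences of the negation
  have hN2 : ∀ x ∈ F, ∀ ℓ (g : Fin ℓ → ℕ), f x ∈ cylS ℓ g → x ∈ W1 ℓ g := by
    intro x hx ℓ g hfx
    obtain ⟨V, hVo, hxV, hmem⟩ := hcon x hx (cylS ℓ g) (isClopen_cylS ℓ g) hfx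
    refine mem_wOp_of f hVo hxV ?_
    have : V ∩ (G \ f ⁻¹' cylS ℓ g) = (V \ f ⁻¹' cylS ℓ g) ∩ G := by
      ext z; simp only [mem_inter_iff, mem_diff, mem_preimage]; tauto
    rw [this]; exact hmem
  have hN1 : ∀ x ∈ F, ∀ ℓ (g : Fin ℓ → ℕ), f x ∉ cylS ℓ g → x ∈ W2 ℓ g := by
    intro x hx ℓ g hfx
    obtain ⟨V, hVo, hxV, hmem⟩ :=
      hcon x hx (cylS ℓ g)ᶜ (isClopen_cylS ℓ g).compl hfx
    refine mem_wOp_of f hVo hxV ?_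
    have : V ∩ (G ∩ f ⁻¹' cylS ℓ g) = (V \ f ⁻¹' (cylS ℓ g)ᶜ) ∩ G := by
      ext z; simp only [mem_inter_iff, mem_diff, mem_preimage, mem_compl_iff, not_not]
      tauto
    rw [this]; exact hmem
  -- `P ℓ g ⊆ f ⁻¹' cylS ℓ g`
  have hPF : ∀ ℓ (g : Fin ℓ → ℕ), P ℓ g ⊆ F := fun ℓ g z hz => hz.1
  have hPf : ∀ ℓ (g : Fin ℓ → ℕ), ∀ z ∈ P ℓ g, f z ∈ cylS ℓ g := by
    intro ℓ g z hz
    by_contra h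
    exact hz.2 (hN1 z hz.1 ℓ g h)
  have hDP : ∀ ℓ (g : Fin ℓ → ℕ), D ℓ g ⊆ P ℓ g := fun ℓ g z hz => hz.1
  have hDclosed : ∀ ℓ (g : Fin ℓ → ℕ), IsClosed (D ℓ g) := by
    intro ℓ g
    exact IsClosed.sdiff (hF.inter (isOpen_wOp f _).isClosed_compl)
      (isOpen_biUnion fun g' _ => isOpen_wOp f _)
  -- a point of `D ℓ g'` lying in `W1 ℓ g` must have `g' = g`
  have hDW : ∀ ℓ (g g' : Fin ℓ → ℕ) (z : X), z ∈ D ℓ g' → z ∈ W1 ℓ g → g' = g := by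
    intro ℓ g g' z hzD hzW
    by_contra hne
    exact hzD.2 (mem_biUnion (show g ∈ {h | h ≠ g'} from fun h => hne h.symm) hzW)
  -- each level union is closed
  have hLevelClosed : ∀ ℓ, IsClosed (⋃ g : Fin ℓ → ℕ, D ℓ g) := by
    intro ℓ
    rw [← closure_subset_iff_isClosed]
    intro y hy
    have hyF : y ∈ F :=
      closure_minimal (iUnion_subset fun g => (hDP ℓ g).trans (hPF ℓ g)) hF hy
    have hfy : f y ∈ cylS ℓ (fun i => f y i) := fun i => rfl
    have hyW : y ∈ W1 ℓ (fun i => f y i) := hN2 y hyF ℓ _ hfy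
    have hmem : y ∈ closure (W1 ℓ (fun i => f y i) ∩ ⋃ g, D ℓ g) :=
      (isOpen_wOp f _).inter_closure ⟨hyW, hy⟩
    have hsub : W1 ℓ (fun i => f y i) ∩ (⋃ g, D ℓ g) ⊆ D ℓ (fun i => f y i) := by
      rintro z ⟨hzW, hzU⟩
      obtain ⟨g', hzD⟩ := mem_iUnion.1 hzU
      rwa [hDW ℓ _ g' z hzD hzW] at hzD
    exact mem_iUnion.2 ⟨_, (hDclosed ℓ _).closure_subset (closure_mono hsub hmem)⟩
  have hTclosed : IsClosed T := isClosed_iInter hLevelClosed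
  -- `f` is continuous on `T`
  have hTcont : ContinuousOn f T := by
    intro y hy
    rw [ContinuousWithinAt, Filter.tendsto_def]
    intro S hS
    obtain ⟨ℓ, hℓ⟩ := cylS_mem_nhds hS
    obtain ⟨g, hyD⟩ := mem_iUnion.1 (mem_iInter.1 hy ℓ)
    have hfy : f y ∈ cylS ℓ g := hPf ℓ g y (hDP ℓ g hyD)
    have hgeq : g = (fun i : Fin ℓ => f y i) := funext fun i => (hfy i).symm
    have hyW : y ∈ W1 ℓ g := hN2 y (hPF ℓ g (hDP ℓ g hyD)) ℓ g hfy
    refine mem_nhdsWithin.2 ⟨W1 ℓ g, isOpen_wOp f _, hyW, ?_⟩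
    rintro z ⟨hzW, hzT⟩
    obtain ⟨g', hzD⟩ := mem_iUnion.1 (mem_iInter.1 hzT ℓ)
    have hg' : g' = g := hDW ℓ g g' z hzD hzW
    have hfz : f z ∈ cylS ℓ g := hg' ▸ hPf ℓ g' z (hDP ℓ g' hzD)
    exact hℓ (by rw [hgeq] at hfz; exact hfz)
  -- `N` belongs to the ideal
  have hNmem : N ∈ contIdeal f := by
    refine contIdeal_union f ?_ ?_ <;>
      refine contIdeal_iUnion f _ fun ℓ => contIdeal_iUnion f _ fun g => ?_
    · exact wOp_inter_mem f _
    · exact wOp_inter_mem f _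
  -- the covering
  have hcover : F ∩ G ⊆ N ∪ T := by
    rintro x ⟨hxF, hxG⟩
    by_cases hxN : x ∈ N
    · exact Or.inl hxN
    refine Or.inr (mem_iInter.2 fun ℓ => mem_iUnion.2 ⟨fun i => f x i, ?_, ?_⟩)
    · refine ⟨hxF, fun hxW2 => hxN ?_⟩
      exact Or.inr (mem_iUnion.2 ⟨ℓ, mem_iUnion.2
        ⟨fun i => f x i, hxW2, hxG, fun i => rfl⟩⟩)
    · intro hxU
      obtain ⟨g', hg', hxW1⟩ := mem_iUnion₂.1 hxU
      refine hxN (Or.inl (mem_iUnion.2 ⟨ℓ, mem_iUnion.2 ⟨g', hxW1, hxG, ?_⟩⟩))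
      intro hmem
      exact hg' (funext fun i => (hmem i).symm)
  -- contradiction
  apply hFG
  refine contIdeal_mono f hcover (contIdeal_union f hNmem ?_)
  exact ⟨fun _ => T, fun n => ⟨hTclosed, hTcont⟩, subset_iUnion (fun _ : ℕ => T) 0⟩
end
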